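/- arXiv:1409.7004 — 5 statements merged into one kernel-verified Lean document; each statement's English description precedes it below -/
import Mathlib

section
/- Let n ≥ 4 and let <_τ be a monomial order on ℕ^n such that for every i with 1 ≤ i ≤ n, the i-th induced ordering of <_τ equals the i-th induced ordering of the lexicographic order. Then <_τ is the lexicographic order on ℕ^n. -/
open Matrix BigOperators

def lexLt {n : ℕ} {α : Type*} [LinearOrder α] (a b : Fin n → α) : Prop :=
  ∃ i : Fin n, a i < b i ∧ ∀ j : Fin n, j < i → a j = b j

def IsMonomialOrder {n : ℕ} (r : (Fin n → ℕ) → (Fin n → ℕ) → Prop) : Prop :=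
  IsStrictTotalOrder (Fin n → ℕ) r ∧
  (∀ a : Fin n → ℕ, a ≠ 0 → r 0 a) ∧
  (∀ a b c : Fin n → ℕ, r a b → r (a + c) (b + c))

def degLexLt {n : ℕ} (a b : Fin n → ℕ) : Prop :=
  (∑ i, a i) < (∑ i, b i) ∨ ((∑ i, a i) = (∑ i, b i) ∧ lexLt a b)

def revLexLt {n : ℕ} (a b : Fin n → ℕ) : Prop :=
  (∑ i, a i) < (∑ i, b i) ∨
  ((∑ i, a i) = (∑ i, b i) ∧ ∃ i : Fin n, b i < a i ∧ ∀ j : Fin n, i < j → a j = b j)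

lemma lexLt_asymm {n : ℕ} {a b : Fin n → ℕ} (h : lexLt a b) : ¬ lexLt b a := by
  rintro ⟨i', h1', h2'⟩
  obtain ⟨i, h1, h2⟩ := h
  rcases lt_trichotomy i i' with hlt | heq | hgt
  · exact absurd (h2' i hlt) (ne_of_lt h1).symm
  · subst heq; omega
  · exact absurd (h2 i' hgt) (Ne.symm (ne_of_lt h1'))

lemma lexLt_trichot {n : ℕ} {a b : Fin n → ℕ} (h : a ≠ b) : lexLt a b ∨ lexLt b a := by
  have hne : (Finset.univ.filter (fun i => a i ≠ b i)).Nonempty := by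
    by_contra hc
    apply h
    funext j
    by_contra hj
    exact hc ⟨j, by simp [hj]⟩
  set s := Finset.univ.filter (fun i => a i ≠ b i)
  obtain ⟨i, hi, hmin⟩ := s.exists_min_image id hne
  have hne_i : a i ≠ b i := by simpa [s] using hi
  have hpre : ∀ j : Fin n, j < i → a j = b j := by
    intro j hj
    by_contra hjn
    exact absurd (hmin j (by simp [s, hjn])) (not_le.mpr hj)
  rcases lt_or_gt_of_ne hne_i with h1 | h1
  · exact Or.inl ⟨i, h1, hpre⟩
  · exact Or.inr ⟨i, h1, fun j hj => (hpre j hj).symm⟩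

/-- If `n ≥ 4` and all induced orderings of a monomial order agree with those of
the lexicographic order, then the order is the lexicographic order. -/
theorem stmt_4 {n : ℕ} (hn : 4 ≤ n) (r : (Fin n → ℕ) → (Fin n → ℕ) → Prop)
    (hr : IsMonomialOrder r)
    (hind : ∀ i : Fin n, ∀ a b : Fin n → ℕ, a i = 0 → b i = 0 → (r a b ↔ lexLt a b)) :
    ∀ a b : Fin n → ℕ, r a b ↔ lexLt a b := by
  obtain ⟨hsto, hzero, hadd⟩ := hr
  have htrans : ∀ {a b c}, r a b → r b c → r a c := fun h1 h2 => hsto.trans _ _ _ h1 h2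
  have hirr : ∀ a, ¬ r a a := hsto.irrefl
  have htri : ∀ a b, r a b ∨ a = b ∨ r b a := fun a b => by
    by_cases h1 : r a b
    · exact Or.inl h1
    by_cases h2 : r b a
    · exact Or.inr (Or.inr h2)
    exact Or.inr (Or.inl (hsto.trichotomous a b h1 h2))
  have hasymm : ∀ {a b}, r a b → ¬ r b a := by
    intro a b h1 h2; exact hirr a (htrans h1 h2)
  set i0 : Fin n := ⟨0, by omega⟩ with hi0
  set i1 : Fin n := ⟨1, by omega⟩ with hi1
  set e0 : Fin n → ℕ := fun j => if j = i0 then 1 else 0 with he0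
  set e1 : Fin n → ℕ := fun j => if j = i1 then 1 else 0 with he1
  -- Lemma A: every v with v i0 = 0 satisfies r v e0
  have lemA : ∀ v : Fin n → ℕ, v i0 = 0 → r v e0 := by
    intro v hv
    set N := v i1 + 1 with hN
    set w : Fin n → ℕ := fun j => N * e1 j with hw
    have hw0 : w i0 = 0 := by simp [hw, he1, hi0, hi1, Fin.ext_iff]
    have h1 : r v w := by
      rw [hind i0 v w hv hw0]
      refine ⟨i1, ?_, ?_⟩
      · simp [hw, he1, hN]
      · intro j hj
        have : j = i0 := by
          apply Fin.ext; have := hj; simp [hi1, Fin.lt_def] at this ⊢; omega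
        rw [this, hv, hw0]
    have h2 : r w e0 := by
      have hk : ∃ k : Fin n, k ≠ i0 ∧ k ≠ i1 := ⟨⟨2, by omega⟩, by simp [hi0, Fin.ext_iff], by simp [hi1, Fin.ext_iff]⟩
      obtain ⟨k, hk0, hk1⟩ := hk
      have hwk : w k = 0 := by simp [hw, he1, hk1]
      have hek : e0 k = 0 := by simp [he0, hk0]
      rw [hind k w e0 hwk hek]
      refine ⟨i0, ?_, ?_⟩
      · simp [hw, he1, he0, hi0, hi1, Fin.ext_iff]
      · intro j hj
        exact absurd hj (by simp [hi0, Fin.lt_def])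
    exact htrans h1 h2
  -- translation cancellation
  have hcancel : ∀ a b c : Fin n → ℕ, r (a + c) (b + c) → r a b := by
    intro a b c h
    rcases htri a b with h1 | h1 | h1
    · exact h1
    · subst h1; exact absurd h (hirr _)
    · exact absurd (hadd _ _ c h1) (hasymm h)
  -- main direction
  have main : ∀ a b : Fin n → ℕ, lexLt a b → r a b := by
    intro a b hab
    set c : Fin n → ℕ := fun j => min (a j) (b j) with hc
    set a' : Fin n → ℕ := fun j => a j - c j with ha'
    set b' : Fin n → ℕ := fun j => b j - c j with hb'
    have haa : a' + c = a := by funext j; simp [ha', hc]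
    have hbb : b' + c = b := by funext j; simp [hb', hc]
    suffices h : r a' b' by
      have := hadd _ _ c h
      rwa [haa, hbb] at this
    obtain ⟨i, h1, h2⟩ := hab
    have ha'i : a' i = 0 := by simp only [ha', hc]; omega
    have hb'i : 0 < b' i := by simp only [hb', hc]; omega
    have hlex' : lexLt a' b' := ⟨i, by omega, fun j hj => by simp [ha', hb', h2 j hj]⟩
    by_cases hi : i = i0
    · -- hard case: first difference at coordinate 0
      subst hi
      have h3 : r a' e0 := lemA a' ha'i
      by_cases hbe : b' = e0
      · rwa [hbe]
      · have h4 : r e0 b' := by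
          set d : Fin n → ℕ := fun j => b' j - e0 j with hd
          have hde : d + e0 = b' := by
            funext j
            by_cases hj : j = i0 <;> simp [hd, he0, hj] <;> omega
          have hdne : d ≠ 0 := by
            intro h0
            apply hbe
            rw [← hde, h0, zero_add]
          have := hadd 0 d e0 (hzero d hdne)
          rwa [zero_add, hde] at this
        exact htrans h3 h4
    · -- both vanish at coordinate 0
      have hii : i0 < i := by
        rcases Fin.lt_or_lt_of_ne (Ne.symm hi) with h | h
        · exact h
        · exact absurd h (by simp [hi0, Fin.lt_def])
      have hab0 : a' i0 = b' i0 := by simp [ha', hb', h2 i0 hii]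
      have ha0 : a' i0 = 0 := by
        have := h2 i0 hii; simp [ha', hc, this]
      rw [hind i0 a' b' ha0 (hab0 ▸ ha0)]
      exact hlex'
  intro a b
  constructor
  · intro h
    by_contra hlex
    rcases eq_or_ne a b with heq | hne
    · subst heq; exact hirr a h
    · rcases lexLt_trichot hne with h1 | h1
      · exact hlex h1
      · exact hasymm h (main b a h1)
  · exact main a b
end

section
/- Let n ≥ 4 and let <_τ be a monomial order on ℕ^n such that for every i with 1 ≤ i ≤ n, the i-th induced ordering of <_τ equals the i-th induced ordering of the reverse lexicographic order. Then <_τ is the reverse lexicographic order on ℕ^n. -/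
open Matrix BigOperators

lemma revlex_irrefl {n : ℕ} (a : Fin n → ℕ) : ¬ revLexLt a a := by
  rintro (h | ⟨-, i, h, -⟩) <;> exact absurd h (lt_irrefl _)

lemma revlex_asymm {n : ℕ} {a b : Fin n → ℕ} (h : revLexLt a b) : ¬ revLexLt b a := by
  rintro (h2 | ⟨e2, i2, hi2, hj2⟩)
  · rcases h with h1 | ⟨e1, -⟩ <;> omega
  · rcases h with h1 | ⟨e1, i1, hi1, hj1⟩
    · omega
    · rcases lt_trichotomy i1 i2 with hlt | heq | hlt
      · have := hj1 i2 hlt; omega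
      · subst heq; omega
      · have := hj2 i1 hlt; omega

lemma revlex_total {n : ℕ} {a b : Fin n → ℕ} (h : a ≠ b) : revLexLt a b ∨ revLexLt b a := by
  rcases lt_trichotomy (∑ i, a i) (∑ i, b i) with hs | hs | hs
  · exact Or.inl (Or.inl hs)
  · have hne : (Finset.univ.filter fun i => a i ≠ b i).Nonempty := by
      by_contra hc
      rw [Finset.not_nonempty_iff_eq_empty, Finset.filter_eq_empty_iff] at hc
      exact h (funext fun i => by_contra fun hh => hc (Finset.mem_univ i) hh)
    set s := Finset.univ.filter fun i => a i ≠ b i with hsdef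
    have hmem := s.max'_mem hne
    set m := s.max' hne with hm
    have hmne : a m ≠ b m := (Finset.mem_filter.mp hmem).2
    have hmax : ∀ j : Fin n, m < j → a j = b j := by
      intro j hj
      by_contra hc
      have : j ∈ s := Finset.mem_filter.mpr ⟨Finset.mem_univ _, hc⟩
      exact absurd (s.le_max' j this) (not_le.mpr hj)
    rcases Nat.lt_or_ge (a m) (b m) with hlt | hge
    · exact Or.inr (Or.inr ⟨hs.symm, m, hlt, fun j hj => (hmax j hj).symm⟩)
    · exact Or.inl (Or.inr ⟨hs, m, lt_of_le_of_ne hge (Ne.symm hmne), hmax⟩)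
  · exact Or.inr (Or.inl hs)

lemma revlex_add {n : ℕ} {a b : Fin n → ℕ} (c : Fin n → ℕ) (h : revLexLt a b) :
    revLexLt (a + c) (b + c) := by
  have hsum : ∀ x : Fin n → ℕ, (∑ i, (x + c) i) = (∑ i, x i) + (∑ i, c i) := by
    intro x; simp [Pi.add_apply, Finset.sum_add_distrib]
  rcases h with h | ⟨he, i, hi, hj⟩
  · exact Or.inl (by rw [hsum, hsum]; omega)
  · refine Or.inr ⟨by rw [hsum, hsum]; omega, i, ?_, fun j hjj => ?_⟩
    · simp only [Pi.add_apply]; omega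
    · simp only [Pi.add_apply]; rw [hj j hjj]

lemma revlex_add_iff {n : ℕ} {a b c : Fin n → ℕ} :
    revLexLt (a + c) (b + c) ↔ revLexLt a b := by
  constructor
  · intro h
    rcases eq_or_ne a b with rfl | hne
    · exact absurd h (revlex_irrefl _)
    · rcases revlex_total hne with h' | h'
      · exact h'
      · exact absurd (revlex_add c h') (revlex_asymm h)
  · exact revlex_add c

section rfacts
variable {n : ℕ} {r : (Fin n → ℕ) → (Fin n → ℕ) → Prop} (hr : IsMonomialOrder r)
include hr

lemma r_irrefl (a : Fin n → ℕ) : ¬ r a a := by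
  haveI := hr.1; exact irrefl_of r a

lemma r_trans {a b c : Fin n → ℕ} (h1 : r a b) (h2 : r b c) : r a c := by
  haveI := hr.1; exact _root_.trans h1 h2

lemma r_trichot (a b : Fin n → ℕ) : r a b ∨ a = b ∨ r b a := by
  haveI := hr.1; exact trichotomous_of r a b

lemma r_asymm {a b : Fin n → ℕ} (h : r a b) : ¬ r b a := fun h2 =>
  r_irrefl hr a (r_trans hr h h2)

lemma r_add_iff {a b : Fin n → ℕ} (c : Fin n → ℕ) : r (a + c) (b + c) ↔ r a b := by
  constructor
  · intro h
    rcases r_trichot hr a b with h' | rfl | h'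
    · exact h'
    · exact absurd h (r_irrefl hr _)
    · exact absurd (hr.2.2 b a c h') (r_asymm hr h)
  · exact hr.2.2 a b c

end rfacts

def single {n : ℕ} (m : Fin n) (D : ℕ) : Fin n → ℕ := fun i => if i = m then D else 0

lemma single_apply_ne {n : ℕ} {m i : Fin n} (h : i ≠ m) (D : ℕ) : single m D i = 0 := by
  simp [_root_.single, h]

lemma sum_single {n : ℕ} (m : Fin n) (D : ℕ) : (∑ i, single m D i) = D := by
  simp [_root_.single]

lemma rev_to_single {n : ℕ} {A : Fin n → ℕ} {m i : Fin n} {D : ℕ}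
    (hsum : (∑ j, A j) = D) (him : m < i) (hAi : 0 < A i)
    (htop : ∀ j, i < j → A j = 0) : revLexLt A (single m D) := by
  refine Or.inr ⟨by rw [hsum, sum_single], i, ?_, fun j hj => ?_⟩
  · rw [single_apply_ne (by exact ne_of_gt him)]; exact hAi
  · rw [htop j hj, single_apply_ne (by exact ne_of_gt (him.trans hj))]

lemma single_to_rev {n : ℕ} {B : Fin n → ℕ} {m : Fin n} {D : ℕ}
    (hsum : (∑ j, B j) = D) (hBm : B m < D)
    (htop : ∀ j, m < j → B j = 0) : revLexLt (single m D) B := by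
  refine Or.inr ⟨by rw [hsum, sum_single], m, ?_, fun j hj => ?_⟩
  · simpa [_root_.single] using hBm
  · rw [htop j hj, single_apply_ne (by exact ne_of_gt hj)]

lemma sum_pos_of_ne {n : ℕ} {A : Fin n → ℕ} {i : Fin n} (h : A i ≠ 0) :
    0 < ∑ j, A j :=
  lt_of_lt_of_le (Nat.pos_of_ne_zero h)
    (Finset.single_le_sum (fun j _ => Nat.zero_le (A j)) (Finset.mem_univ i))

lemma sum_lt_of_two {n : ℕ} {B : Fin n → ℕ} {q t : Fin n} (hqt : t ≠ q) (ht : B t ≠ 0) :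
    B q < ∑ j, B j := by
  have h1 : (∑ i ∈ ({q, t} : Finset (Fin n)), B i) ≤ ∑ j, B j :=
    Finset.sum_le_sum_of_subset (Finset.subset_univ _)
  rw [Finset.sum_pair (Ne.symm hqt)] at h1
  have := Nat.pos_of_ne_zero ht
  omega

lemma core {n : ℕ} (hn : 4 ≤ n) {r : (Fin n → ℕ) → (Fin n → ℕ) → Prop}
    (hr : IsMonomialOrder r)
    (hind : ∀ i : Fin n, ∀ a b : Fin n → ℕ, a i = 0 → b i = 0 → (r a b ↔ revLexLt a b))
    (A B : Fin n → ℕ) (hdisj : ∀ i, A i = 0 ∨ B i = 0) (hAB : revLexLt A B) : r A B := by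
  by_cases hcz : ∃ i, A i = 0 ∧ B i = 0
  · obtain ⟨i, h1, h2⟩ := hcz
    exact (hind i A B h1 h2).mpr hAB
  have hz : ∀ i : Fin n, A i = 0 → B i ≠ 0 := by
    intro i h1 h2; exact hcz ⟨i, h1, h2⟩
  have hstep : ∀ c : Fin n → ℕ, (∃ j, A j = 0 ∧ c j = 0) → (∃ k, c k = 0 ∧ B k = 0) →
      revLexLt A c → revLexLt c B → r A B := by
    rintro c ⟨j, hj1, hj2⟩ ⟨k, hk1, hk2⟩ h1 h2
    exact r_trans hr ((hind j A c hj1 hj2).mpr h1) ((hind k c B hk1 hk2).mpr h2)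
  by_cases hA0 : A = 0
  · subst hA0
    have hB0 : B ≠ 0 := by
      intro h; subst h; exact revlex_irrefl _ hAB
    exact hr.2.1 B hB0
  have hB0 : B ≠ 0 := by
    intro h; subst h
    rcases hAB with h | ⟨he, i, hi, -⟩
    · simp at h
    · have hA : (∑ j : Fin n, A j) = 0 := by simpa using he
      rw [Finset.sum_eq_zero_iff] at hA
      have := hA i (Finset.mem_univ i)
      simp only [Pi.zero_apply] at hi
      omega
  -- max support of B
  have hBne : (Finset.univ.filter fun i => B i ≠ 0).Nonempty := by
    rcases Function.ne_iff.mp hB0 with ⟨i, hi⟩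
    exact ⟨i, Finset.mem_filter.mpr ⟨Finset.mem_univ i, hi⟩⟩
  obtain ⟨q, hq, hqtop⟩ : ∃ q : Fin n, B q ≠ 0 ∧ ∀ j, q < j → B j = 0 := by
    refine ⟨(Finset.univ.filter fun i => B i ≠ 0).max' hBne,
      (Finset.mem_filter.mp ((Finset.univ.filter fun i => B i ≠ 0).max'_mem hBne)).2, ?_⟩
    intro j hj
    by_contra hc
    exact absurd ((Finset.univ.filter fun i => B i ≠ 0).le_max' j
      (Finset.mem_filter.mpr ⟨Finset.mem_univ j, hc⟩)) (not_le.mpr hj)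
  have hAq : A q = 0 := by rcases hdisj q with h | h; exact h; exact absurd h hq
  rcases hAB with hlt | ⟨heq, i, hi, hj⟩
  · -- degree case
    have hdB1 : 0 < ∑ j, B j := by omega
    by_cases hsing : ∀ t, B t ≠ 0 → t = q
    · by_cases hq1 : q.val = n - 1
      · -- D-c : B supported at q = n-1, c = single 0 dA
        have h2q : (⟨n-2, by omega⟩ : Fin n) ≠ q := Fin.ne_of_val_ne (by simp only [Fin.val_mk]; omega)
        have hB2 : B ⟨n-2, by omega⟩ = 0 := by
          by_contra hc; exact h2q (hsing _ hc)
        have hA2 : A ⟨n-2, by omega⟩ ≠ 0 := fun h => hz _ h hB2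
        refine hstep (single ⟨0, by omega⟩ (∑ j, A j)) ⟨q, hAq, ?_⟩
          ⟨⟨1, by omega⟩, ?_, ?_⟩ ?_ ?_
        · exact single_apply_ne (Fin.ne_of_val_ne (by simp only [Fin.val_mk]; omega)) _
        · exact single_apply_ne (Fin.ne_of_val_ne (by simp only [Fin.val_mk]; omega)) _
        · by_contra hc
          have := hsing _ hc
          simp only [Fin.ext_iff, Fin.val_mk] at this; omega
        · refine rev_to_single rfl (i := ⟨n-2, by omega⟩)
            (Fin.lt_def.mpr (by simp only [Fin.val_mk]; omega)) (Nat.pos_of_ne_zero hA2) ?_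
          intro j hjj
          have hjq : j = q := by
            simp only [Fin.lt_def, Fin.val_mk] at hjj
            rw [Fin.ext_iff]
            have := j.isLt; omega
          rw [hjq]; exact hAq
        · exact Or.inl (by rw [sum_single]; exact hlt)
      · -- D-b : B supported at q, q.val < n-1, c = single (q+1) dB
        have hq1lt : q.val + 1 < n := by have := q.isLt; omega
        have hqq1 : q ≠ (⟨q.val + 1, hq1lt⟩ : Fin n) :=
          Fin.ne_of_val_ne (by simp only [Fin.val_mk]; omega)
        have hcommon : ∃ k : Fin n, single (⟨q.val + 1, hq1lt⟩ : Fin n) (∑ j, B j) k = 0 ∧ B k = 0 := by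
          rcases Nat.lt_or_ge q.val 2 with hcase | hcase
          · refine ⟨⟨q.val + 2, by omega⟩,
              single_apply_ne (Fin.ne_of_val_ne (by simp only [Fin.val_mk]; omega)) _, ?_⟩
            by_contra hc
            have := hsing _ hc
            simp only [Fin.ext_iff, Fin.val_mk] at this; omega
          · refine ⟨⟨0, by omega⟩,
              single_apply_ne (Fin.ne_of_val_ne (by simp only [Fin.val_mk]; omega)) _, ?_⟩
            by_contra hc
            have := hsing _ hc
            simp only [Fin.ext_iff, Fin.val_mk] at this; omega
        refine hstep (single ⟨q.val + 1, hq1lt⟩ (∑ j, B j)) ⟨q, hAq, single_apply_ne hqq1 _⟩ hcommon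
          (Or.inl (by rw [sum_single]; exact hlt)) ?_
        refine single_to_rev rfl ?_ ?_
        · rw [hqtop ⟨q.val + 1, hq1lt⟩ (Fin.lt_def.mpr (by simp only [Fin.val_mk]; omega))]
          omega
        · intro j hjj
          refine hqtop j (lt_trans (Fin.lt_def.mpr ?_ : q < ⟨q.val + 1, hq1lt⟩) hjj)
          simp only [Fin.val_mk]; omega
    · -- D-a : c = single q dB
      push_neg at hsing
      obtain ⟨t, ht, htq⟩ := hsing
      have hAt : A t = 0 := by rcases hdisj t with h | h; exact h; exact absurd h ht
      obtain ⟨k, hk⟩ := Function.ne_iff.mp hA0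
      have hBk : B k = 0 := by rcases hdisj k with h | h; exact absurd h hk; exact h
      have hkq : k ≠ q := fun h => hq (h ▸ hBk)
      refine hstep (single q (∑ j, B j)) ⟨t, hAt, single_apply_ne htq _⟩
        ⟨k, single_apply_ne hkq _, hBk⟩
        (Or.inl (by rw [sum_single]; exact hlt))
        (single_to_rev rfl (sum_lt_of_two htq ht) hqtop)
  · -- equal degree case
    have hnolater : ∀ j : Fin n, ¬ i < j := by
      intro j hjj
      have h1 := hj j hjj
      rcases hdisj j with h2 | h2
      · exact hz j h2 (by omega)
      · exact hz j (by omega) h2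
    have hival : i.val = n - 1 := by
      by_contra hc
      have hlt2 : i.val + 1 < n := by have := i.isLt; omega
      exact hnolater ⟨i.val + 1, hlt2⟩ (Fin.lt_def.mpr (by simp only [Fin.val_mk]; omega))
    have hBi : B i = 0 := by
      rcases hdisj i with h | h
      · omega
      · exact h
    have hAi : 0 < A i := by omega
    have hqi : q < i := by
      rcases lt_trichotomy q i with h | h | h
      · exact h
      · exact absurd (h ▸ hBi) hq
      · exact absurd h (hnolater q)
    have hqval : q.val < n - 1 := by
      have := Fin.lt_def.mp hqi; omega
    have hdA1 : 0 < ∑ j, A j := sum_pos_of_ne (i := i) (by omega)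
    have htopA : ∀ j, i < j → A j = 0 := fun j hjj => absurd hjj (hnolater j)
    by_cases hq2 : q.val + 1 < n - 1
    · -- E-a : c = single (q+1) dA
      have hq1lt : q.val + 1 < n := by omega
      refine hstep (single ⟨q.val + 1, hq1lt⟩ (∑ j, A j))
        ⟨q, hAq, single_apply_ne (Fin.ne_of_val_ne (by simp only [Fin.val_mk]; omega)) _⟩
        ⟨i, single_apply_ne (Fin.ne_of_val_ne (by simp only [Fin.val_mk]; omega)) _, hBi⟩
        (rev_to_single rfl (Fin.lt_def.mpr (by simp only [Fin.val_mk]; omega)) hAi htopA) ?_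
      refine single_to_rev heq.symm ?_ ?_
      · rw [hqtop ⟨q.val + 1, hq1lt⟩ (Fin.lt_def.mpr (by simp only [Fin.val_mk]; omega))]
        omega
      · intro j hjj
        refine hqtop j (lt_trans (Fin.lt_def.mpr ?_ : q < ⟨q.val + 1, hq1lt⟩) hjj)
        simp only [Fin.val_mk]; omega
    · -- q.val = n - 2
      have hqn2 : q.val = n - 2 := by omega
      by_cases hsing : ∀ t, B t ≠ 0 → t = q
      · -- E-c : B = dB e_{n-2}, c = (dA - 1) e_0 + e_{n-1}
        have hsuppA : ∀ t : Fin n, t ≠ q → A t ≠ 0 := by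
          intro t htq hAt
          exact htq (hsing t (hz t hAt))
        set c : Fin n → ℕ := _root_.single ⟨0, by omega⟩ ((∑ j, A j) - 1) + _root_.single i 1 with hcdef
        have hi0 : (⟨0, by omega⟩ : Fin n) ≠ i := Fin.ne_of_val_ne (by simp only [Fin.val_mk]; omega)
        have hsumc : (∑ j, c j) = ∑ j, A j := by
          have : (∑ j, c j) = ((∑ j, A j) - 1) + 1 := by
            simp only [hcdef, Pi.add_apply, Finset.sum_add_distrib, sum_single]
          omega
        have hcapp : ∀ j : Fin n, j ≠ ⟨0, by omega⟩ → j ≠ i → c j = 0 := by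
          intro j h1 h2
          simp only [hcdef, Pi.add_apply, single_apply_ne h1, single_apply_ne h2]
        have hci : c i = 1 := by
          simp [hcdef, _root_.single, Ne.symm hi0]
        have hq0 : q ≠ ⟨0, by omega⟩ := Fin.ne_of_val_ne (by simp only [Fin.val_mk]; omega)
        have hqi' : q ≠ i := ne_of_lt hqi
        have hcq : c q = 0 := hcapp q hq0 hqi'
        have h1q : (⟨1, by omega⟩ : Fin n) ≠ q := Fin.ne_of_val_ne (by simp only [Fin.val_mk]; omega)
        have hB1 : B ⟨1, by omega⟩ = 0 := by
          by_contra hc2; exact h1q (hsing _ hc2)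
        refine hstep c ⟨q, hAq, hcq⟩
          ⟨⟨1, by omega⟩, hcapp _ (Fin.ne_of_val_ne (by simp only [Fin.val_mk]; omega)) (Fin.ne_of_val_ne (by simp only [Fin.val_mk]; omega)), hB1⟩
          ?_ ?_
        · -- revLexLt A c
          refine Or.inr ⟨hsumc.symm, ?_⟩
          rcases Nat.lt_or_ge 1 (A i) with hAi2 | hAi2
          · exact ⟨i, by omega, fun j hjj => absurd hjj (hnolater j)⟩
          · -- A i = 1 : witness n - 3
            have hAi1 : A i = 1 := by omega
            refine ⟨⟨n - 3, by omega⟩, ?_, ?_⟩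
            · have h3q : (⟨n - 3, by omega⟩ : Fin n) ≠ q := Fin.ne_of_val_ne (by simp only [Fin.val_mk]; omega)
              have h3i : (⟨n - 3, by omega⟩ : Fin n) ≠ i := Fin.ne_of_val_ne (by simp only [Fin.val_mk]; omega)
              rw [hcapp _ (Fin.ne_of_val_ne (by simp only [Fin.val_mk]; omega)) h3i]
              exact Nat.pos_of_ne_zero (hsuppA _ h3q)
            · intro j hjj
              have hjval : j.val = n - 2 ∨ j.val = n - 1 := by
                have := j.isLt
                simp only [Fin.lt_def, Fin.val_mk] at hjj; omega
              rcases hjval with h | h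
              · have : j = q := by rw [Fin.ext_iff]; omega
                rw [this, hAq, hcq]
              · have : j = i := by rw [Fin.ext_iff]; omega
                rw [this, hci, hAi1]
        · -- revLexLt c B
          exact Or.inr ⟨by rw [hsumc]; exact heq, i, by rw [hBi, hci]; omega,
            fun j hjj => absurd hjj (hnolater j)⟩
      · -- E-b : c = single q dA
        push_neg at hsing
        obtain ⟨t, ht, htq⟩ := hsing
        have hAt : A t = 0 := by rcases hdisj t with h | h; exact h; exact absurd h ht
        refine hstep (single q (∑ j, A j)) ⟨t, hAt, single_apply_ne htq _⟩
          ⟨i, single_apply_ne (ne_of_gt hqi) _, hBi⟩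
          (rev_to_single rfl hqi hAi htopA)
          (single_to_rev heq.symm (by have := sum_lt_of_two htq ht; omega) hqtop)


/-- If `n ≥ 4` and all induced orderings of a monomial order agree with those of
the reverse lexicographic order, then the order is the reverse lexicographic order. -/
theorem stmt_5 {n : ℕ} (hn : 4 ≤ n) (r : (Fin n → ℕ) → (Fin n → ℕ) → Prop)
    (hr : IsMonomialOrder r)
    (hind : ∀ i : Fin n, ∀ a b : Fin n → ℕ, a i = 0 → b i = 0 → (r a b ↔ revLexLt a b)) :
    ∀ a b : Fin n → ℕ, r a b ↔ revLexLt a b := by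
  have key : ∀ a b : Fin n → ℕ, revLexLt a b → r a b := by
    intro a b hab
    set d : Fin n → ℕ := fun i => min (a i) (b i) with hd
    set A : Fin n → ℕ := fun i => a i - d i with hA
    set B : Fin n → ℕ := fun i => b i - d i with hB
    have ha : A + d = a := funext fun i => by simp only [Pi.add_apply, hA, hd]; omega
    have hb : B + d = b := funext fun i => by simp only [Pi.add_apply, hB, hd]; omega
    have hdisj : ∀ i, A i = 0 ∨ B i = 0 := fun i => by simp only [hA, hB, hd]; omega
    have hAB : revLexLt A B := by
      rw [← revlex_add_iff (c := d)]
      rw [ha, hb]; exact hab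
    have hrAB : r A B := core hn hr hind A B hdisj hAB
    have := hr.2.2 A B d hrAB
    rwa [ha, hb] at this
  intro a b
  constructor
  · intro h
    rcases eq_or_ne a b with rfl | hne
    · exact absurd h (r_irrefl hr a)
    rcases revlex_total hne with h' | h'
    · exact h'
    · exact absurd (key b a h') (r_asymm hr h)
  · exact key a b
end

section
/- Let n ≥ 4 and let <_τ be a monomial order on ℕ^n such that for every i with 1 ≤ i ≤ n, the i-th induced ordering of <_τ equals the i-th induced ordering of the graded lexicographic order. Then <_τ is the graded lexicographic order on ℕ^n. -/
open Matrix BigOperators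

section Aux

variable {n : ℕ}

lemma lexLt_trichotomy {a b : Fin n → ℕ} (hab : a ≠ b) : lexLt a b ∨ lexLt b a := by
  have hex : ∃ i, a i ≠ b i := Function.ne_iff.mp hab
  set s : Finset (Fin n) := Finset.univ.filter (fun i => a i ≠ b i) with hs
  have hsne : s.Nonempty := by
    obtain ⟨i, hi⟩ := hex
    exact ⟨i, by simp [hs, hi]⟩
  set i := s.min' hsne with hidef
  have hi : a i ≠ b i := by
    have := s.min'_mem hsne
    simp only [hs, Finset.mem_filter] at this
    exact this.2
  have hmin : ∀ j, j < i → a j = b j := by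
    intro j hj
    by_contra hne
    have : i ≤ j := s.min'_le j (by simp [hs, hne])
    exact absurd hj (not_lt.mpr this)
  rcases lt_or_gt_of_ne hi with h | h
  · exact Or.inl ⟨i, h, hmin⟩
  · exact Or.inr ⟨i, h, fun j hj => (hmin j hj).symm⟩

lemma sum_add_apply (a c : Fin n → ℕ) : (∑ i, (a + c) i) = (∑ i, a i) + (∑ i, c i) := by
  simp [Finset.sum_add_distrib]

lemma lexLt_add_iff (a b c : Fin n → ℕ) : lexLt (a + c) (b + c) ↔ lexLt a b := by
  constructor
  · rintro ⟨i, hi, hj⟩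
    refine ⟨i, by simpa using hi, fun j hji => ?_⟩
    have := hj j hji; simpa using this
  · rintro ⟨i, hi, hj⟩
    refine ⟨i, by simpa using hi, fun j hji => ?_⟩
    simp [hj j hji]

lemma degLexLt_add_iff (a b c : Fin n → ℕ) :
    degLexLt (a + c) (b + c) ↔ degLexLt a b := by
  unfold degLexLt
  rw [sum_add_apply, sum_add_apply, lexLt_add_iff]
  constructor
  · rintro (h | ⟨h1, h2⟩)
    · exact Or.inl (by omega)
    · exact Or.inr ⟨by omega, h2⟩
  · rintro (h | ⟨h1, h2⟩)
    · exact Or.inl (by omega)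
    · exact Or.inr ⟨by omega, h2⟩

lemma degLexLt_trichotomy {a b : Fin n → ℕ} (h : a ≠ b) : degLexLt a b ∨ degLexLt b a := by
  rcases lt_trichotomy (∑ i, a i) (∑ i, b i) with hs | hs | hs
  · exact Or.inl (Or.inl hs)
  · rcases lexLt_trichotomy h with h1 | h1
    · exact Or.inl (Or.inr ⟨hs, h1⟩)
    · exact Or.inr (Or.inr ⟨hs.symm, h1⟩)
  · exact Or.inr (Or.inl hs)

lemma sum_move (b : Fin n → ℕ) (t0 t1 : Fin n) (h : t0 ≠ t1) (v0 v1 : ℕ)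
    (hv : v0 + v1 = b t0 + b t1) :
    (∑ j, (if j = t1 then v1 else if j = t0 then v0 else b j)) = ∑ j, b j := by
  have ht0 : t0 ∈ Finset.univ.erase t1 := Finset.mem_erase.mpr ⟨h, Finset.mem_univ _⟩
  have e1 : ∀ f : Fin n → ℕ,
      (∑ j, f j) = (∑ j ∈ (Finset.univ.erase t1).erase t0, f j) + f t0 + f t1 := by
    intro f
    rw [← Finset.sum_erase_add Finset.univ f (Finset.mem_univ t1),
        ← Finset.sum_erase_add _ f ht0]
  rw [e1 (fun j => if j = t1 then v1 else if j = t0 then v0 else b j), e1 b]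
  have hcong : (∑ j ∈ (Finset.univ.erase t1).erase t0,
      (if j = t1 then v1 else if j = t0 then v0 else b j))
      = ∑ j ∈ (Finset.univ.erase t1).erase t0, b j := by
    apply Finset.sum_congr rfl
    intro j hj
    simp only [Finset.mem_erase] at hj
    rw [if_neg hj.2.1, if_neg hj.1]
  rw [hcong]
  simp [h]
  omega

/-- The heart of the proof: for two vectors with "disjoint full supports", an
intermediate vector exists sharing a coordinate with each. -/
lemma exists_mid (hn : 4 ≤ n) (a b : Fin n → ℕ)
    (hone : ∀ j, (a j = 0 ∧ 0 < b j) ∨ (b j = 0 ∧ 0 < a j))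
    (hS : ∃ j, 0 < a j) (hab : degLexLt a b) :
    ∃ w : Fin n → ℕ, (∃ i, a i = w i) ∧ (∃ i, w i = b i) ∧ degLexLt a w ∧ degLexLt w b := by
  have hne : ∀ j, a j ≠ b j := by
    intro j; rcases hone j with ⟨h1, h2⟩ | ⟨h1, h2⟩ <;> omega
  obtain ⟨s, hsa⟩ := hS
  have hsb : b s = 0 := by rcases hone s with ⟨h1, h2⟩ | ⟨h1, h2⟩ <;> omega
  rcases hab with hlt | ⟨hdeg, hlex⟩
  · -- Case II : strictly smaller degree
    by_cases hT2 : ∃ t0 t1 : Fin n, t0 < t1 ∧ 0 < b t0 ∧ 0 < b t1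
    · obtain ⟨t0, t1, h01, hb0, hb1⟩ := hT2
      have hne01 : t0 ≠ t1 := ne_of_lt h01
      have hat0 : a t0 = 0 := by rcases hone t0 with ⟨h1, h2⟩ | ⟨h1, h2⟩ <;> omega
      have hat1 : a t1 = 0 := by rcases hone t1 with ⟨h1, h2⟩ | ⟨h1, h2⟩ <;> omega
      have hsne0 : s ≠ t0 := by intro h; rw [h] at hsa; omega
      have hsne1 : s ≠ t1 := by intro h; rw [h] at hsa; omega
      set w : Fin n → ℕ := fun j => if j = t1 then b t0 + b t1 else if j = t0 then 0 else b j
        with hw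
      have hwsum : (∑ j, w j) = ∑ j, b j := sum_move b t0 t1 hne01 0 _ (by omega)
      have hwt0 : w t0 = 0 := by simp [hw, hne01]
      have hwother : ∀ j, j ≠ t0 → j ≠ t1 → w j = b j := fun j h1 h2 => by simp [hw, h1, h2]
      refine ⟨w, ⟨t0, by rw [hwt0]; exact hat0⟩, ⟨s, hwother s hsne0 hsne1⟩,
        Or.inl (by rw [hwsum]; exact hlt),
        Or.inr ⟨hwsum, t0, by rw [hwt0]; exact hb0,
          fun j hj => hwother j (ne_of_lt hj) (ne_of_lt (hj.trans h01))⟩⟩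
    · -- the support of b is a single point t
      push_neg at hT2
      have hbt : ∃ t, 0 < b t := by
        by_contra h
        push_neg at h
        have h0 : (∑ i, b i) = 0 := Finset.sum_eq_zero fun i _ => by have := h i; omega
        omega
      obtain ⟨t, hbt⟩ := hbt
      have huniq : ∀ j, j ≠ t → 0 < a j := by
        intro j hj
        have hbj : b j = 0 := by
          by_contra hbj
          have hbj' : 0 < b j := Nat.pos_of_ne_zero hbj
          rcases lt_or_gt_of_ne hj with h | h
          · have := hT2 j t h hbj'; omega
          · have := hT2 t j h hbt; omega
        rcases hone j with ⟨h1, h2⟩ | ⟨h1, h2⟩ <;> omega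
      obtain ⟨s1, s0, h10, hs1t, hs0t⟩ : ∃ s1 s0 : Fin n, s1 < s0 ∧ s1 ≠ t ∧ s0 ≠ t := by
        rcases Nat.lt_or_ge t.val 1 with h | h
        · exact ⟨⟨1, by omega⟩, ⟨2, by omega⟩, by simp [Fin.lt_def],
            fun hh => by simp [Fin.ext_iff] at hh; omega,
            fun hh => by simp [Fin.ext_iff] at hh; omega⟩
        · rcases Nat.lt_or_ge t.val 2 with h2 | h2
          · exact ⟨⟨0, by omega⟩, ⟨2, by omega⟩, by simp [Fin.lt_def],
              fun hh => by simp [Fin.ext_iff] at hh; omega,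
              fun hh => by simp [Fin.ext_iff] at hh; omega⟩
          · exact ⟨⟨0, by omega⟩, ⟨1, by omega⟩, by simp [Fin.lt_def],
              fun hh => by simp [Fin.ext_iff] at hh; omega,
              fun hh => by simp [Fin.ext_iff] at hh; omega⟩
      have has1 : 0 < a s1 := huniq s1 hs1t
      have has0 : 0 < a s0 := huniq s0 hs0t
      have hbs0 : b s0 = 0 := by rcases hone s0 with ⟨h1, h2⟩ | ⟨h1, h2⟩ <;> omega
      have hne01 : s0 ≠ s1 := (ne_of_lt h10).symm
      have htne1 : t ≠ s1 := fun hh => hs1t hh.symm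
      have htne0 : t ≠ s0 := fun hh => hs0t hh.symm
      set w : Fin n → ℕ := fun j => if j = s1 then a s1 + a s0 else if j = s0 then 0 else a j
        with hw
      have hwsum : (∑ j, w j) = ∑ j, a j := sum_move a s0 s1 hne01 0 _ (by omega)
      have hws1 : w s1 = a s1 + a s0 := by simp [hw]
      have hws0 : w s0 = 0 := by simp [hw, hne01]
      have hwother : ∀ j, j ≠ s0 → j ≠ s1 → w j = a j := fun j h1 h2 => by simp [hw, h1, h2]
      refine ⟨w, ⟨t, (hwother t htne0 htne1).symm⟩, ⟨s0, by rw [hws0]; exact hbs0.symm⟩,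
        Or.inr ⟨hwsum.symm, s1, by rw [hws1]; omega,
          fun j hj => (hwother j (ne_of_lt (hj.trans h10)) (ne_of_lt hj)).symm⟩,
        Or.inl (by rw [hwsum]; exact hlt)⟩
  · -- Case I : equal degrees, lexLt a b
    have h0n : 0 < n := by omega
    set i0 : Fin n := ⟨0, h0n⟩ with hi0def
    obtain ⟨i, hilt, hiprev⟩ := hlex
    have hieq : i = i0 := by
      by_contra h
      have hlt0 : i0 < i := by
        rw [Fin.lt_def]
        have : i.val ≠ 0 := fun hh => h (Fin.ext (by simp [hi0def, hh]))
        simp [hi0def]; omega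
      exact hne i0 (hiprev i0 hlt0)
    rw [hieq] at hilt
    have ha0 : a i0 = 0 ∧ 0 < b i0 := by
      rcases hone i0 with h | ⟨h1, h2⟩
      · exact h
      · omega
    set S : Finset (Fin n) := Finset.univ.filter (fun j => 0 < a j) with hSdef
    have hSne : S.Nonempty := ⟨s, by simp [hSdef]; omega⟩
    set s1 := S.min' hSne with hs1def
    have hs1a : 0 < a s1 := by
      have := S.min'_mem hSne
      simp only [hSdef, Finset.mem_filter] at this
      exact this.2
    have hs1b : b s1 = 0 := by rcases hone s1 with ⟨h1, h2⟩ | ⟨h1, h2⟩ <;> omega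
    have hs1min : ∀ j, j < s1 → a j = 0 := by
      intro j hj
      by_contra hja
      have : s1 ≤ j := S.min'_le j (by simp [hSdef]; omega)
      exact absurd hj (not_lt.mpr this)
    have hs10 : s1 ≠ i0 := by intro h; rw [h] at hs1a; omega
    by_cases hS2 : ∃ s', 0 < a s' ∧ s' ≠ s1
    · -- the support of a has at least two points
      obtain ⟨s', hs'a, hs's1⟩ := hS2
      have hs'b : b s' = 0 := by rcases hone s' with ⟨h1, h2⟩ | ⟨h1, h2⟩ <;> omega
      have hsum : a s1 + a s' ≤ ∑ i, a i := by
        have h1 : ({s1, s'} : Finset (Fin n)) ⊆ Finset.univ := Finset.subset_univ _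
        have h2 := Finset.sum_le_sum_of_subset (f := a) h1
        rwa [Finset.sum_pair (Ne.symm hs's1)] at h2
      set w : Fin n → ℕ := fun j => if j = s1 then (∑ i, a i) else 0 with hw
      have hwsum : (∑ j, w j) = ∑ i, a i := by simp [hw, Finset.sum_ite_eq']
      have hws1 : w s1 = ∑ i, a i := by simp [hw]
      have hwother : ∀ j, j ≠ s1 → w j = 0 := fun j h1 => by simp [hw, h1]
      refine ⟨w, ⟨i0, by rw [hwother i0 (Ne.symm hs10)]; exact ha0.1⟩,
        ⟨s', by rw [hwother s' hs's1]; exact hs'b.symm⟩,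
        Or.inr ⟨hwsum.symm, s1, by rw [hws1]; omega,
          fun j hj => by rw [hwother j (ne_of_lt hj)]; exact hs1min j hj⟩,
        Or.inr ⟨by rw [hwsum]; exact hdeg, i0, by rw [hwother i0 (Ne.symm hs10)]; exact ha0.2,
          fun j hj => absurd hj (by simp [Fin.lt_def, hi0def])⟩⟩
    · -- the support of a is exactly {s1}
      push_neg at hS2
      have hsing : ∀ j, j ≠ s1 → a j = 0 := by
        intro j hj
        by_contra h
        exact hj (hS2 j (Nat.pos_of_ne_zero h))
      have hposb : ∀ j, j ≠ s1 → 0 < b j := by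
        intro j hj
        have := hsing j hj
        rcases hone j with ⟨h1, h2⟩ | ⟨h1, h2⟩ <;> omega
      have hs1v : 0 < s1.val := by
        rcases Nat.eq_zero_or_pos s1.val with h | h
        · exact absurd (Fin.ext (by simp [hi0def, h]) : s1 = i0) hs10
        · exact h
      rcases Nat.lt_or_ge s1.val 2 with hv | hv
      · -- s1.val = 1 : move mass of b from index 2 to index 3
        set i2 : Fin n := ⟨2, by omega⟩ with hi2def
        set i3 : Fin n := ⟨3, by omega⟩ with hi3def
        have h23 : i2 ≠ i3 := fun hh => by simp [hi2def, hi3def, Fin.ext_iff] at hh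
        have h2s : i2 ≠ s1 := fun hh => by
          rw [Fin.ext_iff] at hh; simp [hi2def] at hh; omega
        have h3s : i3 ≠ s1 := fun hh => by
          rw [Fin.ext_iff] at hh; simp [hi3def] at hh; omega
        have h02 : i0 ≠ i2 := fun hh => by simp [hi0def, hi2def, Fin.ext_iff] at hh
        have h03 : i0 ≠ i3 := fun hh => by simp [hi0def, hi3def, Fin.ext_iff] at hh
        have hs12 : s1 ≠ i2 := Ne.symm h2s
        have hs13 : s1 ≠ i3 := Ne.symm h3s
        have hb2 : 0 < b i2 := hposb i2 h2s
        have ha2 : a i2 = 0 := hsing i2 h2s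
        set w : Fin n → ℕ := fun j => if j = i3 then b i2 + b i3 else if j = i2 then 0 else b j
          with hw
        have hwsum : (∑ j, w j) = ∑ j, b j := sum_move b i2 i3 h23 0 _ (by omega)
        have hwi2 : w i2 = 0 := by simp [hw, h23]
        have hwother : ∀ j, j ≠ i2 → j ≠ i3 → w j = b j := fun j h1 h2 => by simp [hw, h1, h2]
        refine ⟨w, ⟨i2, by rw [hwi2]; exact ha2⟩, ⟨s1, hwother s1 hs12 hs13⟩,
          Or.inr ⟨hdeg.trans hwsum.symm, i0, ?_, ?_⟩,
          Or.inr ⟨hwsum, i2, by rw [hwi2]; exact hb2, ?_⟩⟩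
        · rw [hwother i0 h02 h03, ha0.1]; exact ha0.2
        · intro j hj
          exact absurd hj (by simp [Fin.lt_def, hi0def])
        · intro j hj
          rw [Fin.lt_def] at hj
          simp only [hi2def] at hj
          refine hwother j (fun hh => ?_) (fun hh => ?_)
          · rw [Fin.ext_iff] at hh; simp [hi2def] at hh; omega
          · rw [Fin.ext_iff] at hh; simp [hi3def] at hh; omega
      · -- s1.val ≥ 2 : move mass of b from index 0 to index 1
        set i1 : Fin n := ⟨1, by omega⟩ with hi1def
        have h01 : i0 ≠ i1 := fun hh => by simp [hi0def, hi1def, Fin.ext_iff] at hh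
        have h1s : i1 ≠ s1 := fun hh => by
          rw [Fin.ext_iff] at hh; simp [hi1def] at hh; omega
        have hs11 : s1 ≠ i1 := Ne.symm h1s
        have hb1 : 0 < b i1 := hposb i1 h1s
        have ha1 : a i1 = 0 := hsing i1 h1s
        set w : Fin n → ℕ := fun j => if j = i1 then b i0 + b i1 else if j = i0 then 0 else b j
          with hw
        have hwsum : (∑ j, w j) = ∑ j, b j := sum_move b i0 i1 h01 0 _ (by omega)
        have hwi0 : w i0 = 0 := by simp [hw, h01]
        have hwi1 : w i1 = b i0 + b i1 := by simp [hw]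
        have hwother : ∀ j, j ≠ i0 → j ≠ i1 → w j = b j := fun j h1 h2 => by simp [hw, h1, h2]
        refine ⟨w, ⟨i0, by rw [hwi0]; exact ha0.1⟩, ⟨s1, hwother s1 hs10 hs11⟩,
          Or.inr ⟨hdeg.trans hwsum.symm, i1, ?_, ?_⟩,
          Or.inr ⟨hwsum, i0, by rw [hwi0]; exact ha0.2, ?_⟩⟩
        · rw [hwi1, ha1]; omega
        · intro j hj
          have hj0 : j = i0 := by
            rw [Fin.lt_def] at hj
            simp only [hi1def] at hj
            exact Fin.ext (by simp [hi0def]; omega)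
          rw [hj0, hwi0]
          exact ha0.1
        · intro j hj
          exact absurd hj (by simp [Fin.lt_def, hi0def])

lemma key1 (r : (Fin n → ℕ) → (Fin n → ℕ) → Prop) (hr : IsMonomialOrder r)
    (hind : ∀ i : Fin n, ∀ a b : Fin n → ℕ, a i = 0 → b i = 0 → (r a b ↔ degLexLt a b))
    (a b : Fin n → ℕ) (h : ∃ i, a i = b i) : r a b ↔ degLexLt a b := by
  obtain ⟨hsto, hzero, hadd⟩ := hr
  obtain ⟨i, hi⟩ := h
  set c : Fin n → ℕ := fun j => min (a j) (b j) with hc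
  set a' : Fin n → ℕ := fun j => a j - c j with ha'
  set b' : Fin n → ℕ := fun j => b j - c j with hb'
  have ha : a' + c = a := funext fun j => by simp only [ha', hc, Pi.add_apply]; omega
  have hb : b' + c = b := funext fun j => by simp only [hb', hc, Pi.add_apply]; omega
  have hcanc : ∀ x y : Fin n → ℕ, r (x + c) (y + c) ↔ r x y := by
    intro x y
    constructor
    · intro h
      rcases (or_iff_not_imp_left.mpr fun h1 => or_iff_not_imp_right.mpr fun h2 => hsto.trichotomous x y h1 h2 : r x y ∨ x = y ∨ r y x) with h1 | h1 | h1
      · exact h1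
      · subst h1; exact absurd h (hsto.irrefl _)
      · exact absurd (hsto.trans _ _ _ h (hadd _ _ c h1)) (hsto.irrefl _)
    · exact fun h => hadd _ _ c h
  rw [← ha, ← hb, hcanc, degLexLt_add_iff]
  exact hind i a' b' (by simp [ha', hc, hi]) (by simp [hb', hc, hi])

lemma key2 (hn : 4 ≤ n) (r : (Fin n → ℕ) → (Fin n → ℕ) → Prop) (hr : IsMonomialOrder r)
    (hind : ∀ i : Fin n, ∀ a b : Fin n → ℕ, a i = 0 → b i = 0 → (r a b ↔ degLexLt a b)) :
    ∀ a b : Fin n → ℕ, degLexLt a b → r a b := by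
  intro a b hab
  by_cases hC : ∃ i, a i = b i
  · exact (key1 r hr hind a b hC).mpr hab
  · push_neg at hC
    set c : Fin n → ℕ := fun j => min (a j) (b j) with hc
    set a' : Fin n → ℕ := fun j => a j - c j with ha'
    set b' : Fin n → ℕ := fun j => b j - c j with hb'
    have ha : a' + c = a := funext fun j => by simp only [ha', hc, Pi.add_apply]; omega
    have hb : b' + c = b := funext fun j => by simp only [hb', hc, Pi.add_apply]; omega
    have hone : ∀ j, (a' j = 0 ∧ 0 < b' j) ∨ (b' j = 0 ∧ 0 < a' j) := by
      intro j
      have := hC j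
      simp only [ha', hb', hc]
      omega
    have hab' : degLexLt a' b' := by
      rw [← ha, ← hb] at hab
      exact (degLexLt_add_iff _ _ _).mp hab
    suffices h : r a' b' by
      have h2 := hr.2.2 _ _ c h
      rwa [ha, hb] at h2
    by_cases h0 : a' = 0
    · rw [h0]
      apply hr.2.1
      intro hb0
      rcases hone ⟨0, by omega⟩ with ⟨h1, h2⟩ | ⟨h1, h2⟩
      · rw [hb0] at h2; simp at h2
      · rw [h0] at h2; simp at h2
    · have hS : ∃ j, 0 < a' j := by
        by_contra h
        push_neg at h
        exact h0 (funext fun j => by have := h j; simp only [Pi.zero_apply]; omega)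
      obtain ⟨w, ⟨i1, hw1⟩, ⟨i2, hw2⟩, hw3, hw4⟩ := exists_mid hn a' b' hone hS hab'
      have r1 : r a' w := (key1 r hr hind a' w ⟨i1, hw1⟩).mpr hw3
      have r2 : r w b' := (key1 r hr hind w b' ⟨i2, hw2⟩).mpr hw4
      exact hr.1.trans _ _ _ r1 r2

end Aux

/-- If `n ≥ 4` and all induced orderings of a monomial order agree with those of
the graded lexicographic order, then the order is the graded lexicographic order. -/
theorem stmt_6 {n : ℕ} (hn : 4 ≤ n) (r : (Fin n → ℕ) → (Fin n → ℕ) → Prop)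
    (hr : IsMonomialOrder r)
    (hind : ∀ i : Fin n, ∀ a b : Fin n → ℕ, a i = 0 → b i = 0 → (r a b ↔ degLexLt a b)) :
    ∀ a b : Fin n → ℕ, r a b ↔ degLexLt a b := by
  intro a b
  constructor
  · intro hab
    rcases eq_or_ne a b with rfl | hne
    · exact absurd hab (hr.1.irrefl _)
    · rcases degLexLt_trichotomy hne with h | h
      · exact h
      · have hba : r b a := key2 hn r hr hind b a h
        exact absurd (hr.1.trans _ _ _ hab hba) (hr.1.irrefl _)
  · exact key2 hn r hr hind a b
end

section
/- Let A be an m × n real matrix such that Ker(A) ∩ ℤ^n = {0} and in each column of A the first nonzero entry is positive. Then the relation α <_A β defined by Aα <_lex Aβ (lexicographic comparison of real vectors in ℝ^m) is a monomial order on ℕ^n. -/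
open Matrix BigOperators

lemma lexLt_irrefl {m : ℕ} {α : Type*} [LinearOrder α] (u : Fin m → α) : ¬ lexLt u u := by
  rintro ⟨i, hi, -⟩; exact lt_irrefl _ hi

lemma lexLt_trans {m : ℕ} {α : Type*} [LinearOrder α] {u v w : Fin m → α}
    (h1 : lexLt u v) (h2 : lexLt v w) : lexLt u w := by
  obtain ⟨i, hi, hle⟩ := h1
  obtain ⟨i', hi', hle'⟩ := h2
  rcases lt_trichotomy i i' with h | h | h
  · exact ⟨i, hi.trans_eq (hle' i h), fun j hj => (hle j hj).trans (hle' j (hj.trans h))⟩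
  · subst h
    exact ⟨i, hi.trans hi', fun j hj => (hle j hj).trans (hle' j hj)⟩
  · exact ⟨i', (hle i' h ▸ hi'), fun j hj => (hle j (hj.trans h)).trans (hle' j hj)⟩

lemma lexLt_of_ne {m : ℕ} {α : Type*} [LinearOrder α] {u v : Fin m → α} (h : u ≠ v) :
    lexLt u v ∨ lexLt v u := by
  classical
  have hS : (Finset.univ.filter fun i => u i ≠ v i).Nonempty := by
    rcases Function.ne_iff.mp h with ⟨j, hj⟩
    exact ⟨j, by simp [hj]⟩
  set i := hS.choose with hidef
  set i₀ := (Finset.univ.filter fun i => u i ≠ v i).min' hS with hi0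
  have hmem : i₀ ∈ Finset.univ.filter fun i => u i ≠ v i := Finset.min'_mem _ hS
  have hi : u i₀ ≠ v i₀ := by simpa using hmem
  have hj : ∀ j, j < i₀ → u j = v j := by
    intro j hj
    by_contra hne
    exact absurd (Finset.min'_le _ j (by simp [hne])) (not_le.mpr hj)
  rcases lt_or_gt_of_ne hi with h' | h'
  · exact Or.inl ⟨i₀, h', hj⟩
  · exact Or.inr ⟨i₀, h', fun j hji => (hj j hji).symm⟩

lemma lexLt_add {m : ℕ} {u v w : Fin m → ℝ} (h : lexLt u v) : lexLt (u + w) (v + w) := by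
  obtain ⟨i, hi, hle⟩ := h
  exact ⟨i, by simpa using hi, fun j hj => by simp [hle j hj]⟩

lemma lexLt_zero_min_aux {m n : ℕ} (A : Matrix (Fin m) (Fin n) ℝ)
    (hker : ∀ v : Fin n → ℤ, A.mulVec (fun k => (v k : ℝ)) = 0 → v = 0)
    (hcol : ∀ j : Fin n, ∀ i : Fin m, A i j ≠ 0 → (∀ k : Fin m, k < i → A k j = 0) →
      0 < A i j) (a : Fin n → ℕ) (ha : a ≠ 0) :
    lexLt (0 : Fin m → ℝ) (A.mulVec fun k => (a k : ℝ)) := by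
  classical
  -- every column is nonzero
  have hcolnz : ∀ j : Fin n, ∃ i, A i j ≠ 0 := by
    intro j
    by_contra h
    push_neg at h
    have h0 := hker (fun k => if k = j then 1 else 0) ?_
    · have := congrFun h0 j
      simp at this
    · funext i
      simp only [Matrix.mulVec, dotProduct]
      rw [Finset.sum_eq_zero]
      · rfl
      intro k _
      by_cases hk : k = j
      · subst hk; simp [h i]
      · simp [hk]
  -- leading row of each column
  have hLead : ∀ j : Fin n, ∃ i : Fin m, 0 < A i j ∧ ∀ k, k < i → A k j = 0 := by
    intro j
    obtain ⟨i0, hi0⟩ := hcolnz j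
    set s := Finset.univ.filter fun i => A i j ≠ 0 with hs
    have hsne : s.Nonempty := ⟨i0, by simp [hs, hi0]⟩
    refine ⟨s.min' hsne, ?_, ?_⟩
    · have hmem : s.min' hsne ∈ s := Finset.min'_mem _ _
      have hne : A (s.min' hsne) j ≠ 0 := by simpa [hs] using hmem
      refine hcol j _ hne ?_
      intro k hk
      by_contra hne'
      exact absurd (Finset.min'_le s k (by simp [hs, hne'])) (not_le.mpr hk)
    · intro k hk
      by_contra hne'
      exact absurd (Finset.min'_le s k (by simp [hs, hne'])) (not_le.mpr hk)
  choose lead hleadpos hleadzero using hLead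
  -- support of a
  set S := Finset.univ.filter fun j => a j ≠ 0 with hSdef
  have hSne : S.Nonempty := by
    rcases Function.ne_iff.mp ha with ⟨j, hj⟩
    exact ⟨j, by simp [hSdef]; simpa using hj⟩
  have hTne : (S.image lead).Nonempty := hSne.image _
  set i₀ := (S.image lead).min' hTne with hi0def
  obtain ⟨j₀, hj₀S, hj₀⟩ := Finset.mem_image.mp ((S.image lead).min'_mem hTne)
  have hmin : ∀ j ∈ S, i₀ ≤ lead j := fun j hj =>
    Finset.min'_le _ _ (Finset.mem_image_of_mem _ hj)
  refine ⟨i₀, ?_, ?_⟩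
  · show (0:ℝ) < ∑ j, A i₀ j * (a j : ℝ)
    apply Finset.sum_pos'
    · intro j _
      by_cases hj : a j = 0
      · simp [hj]
      · have hjS : j ∈ S := by simp [hSdef, hj]
        rcases eq_or_lt_of_le (hmin j hjS) with h | h
        · exact mul_nonneg (le_of_lt (h ▸ hleadpos j)) (Nat.cast_nonneg _)
        · rw [hleadzero j i₀ h]; simp
    · refine ⟨j₀, Finset.mem_univ _, ?_⟩
      have haj : 0 < (a j₀ : ℝ) := by
        have : a j₀ ≠ 0 := by simpa [hSdef] using hj₀S
        exact_mod_cast Nat.pos_of_ne_zero this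
      have hApos : 0 < A i₀ j₀ := by rw [hi0def, ← hj₀]; exact hleadpos j₀
      exact mul_pos hApos haj
  · intro k hk
    show (0:ℝ) = ∑ j, A k j * (a j : ℝ)
    rw [Finset.sum_eq_zero]
    intro j _
    by_cases hj : a j = 0
    · simp [hj]
    · have hjS : j ∈ S := by simp [hSdef, hj]
      rw [hleadzero j k (lt_of_lt_of_le hk (hmin j hjS))]
      simp

lemma mulVec_inj_aux {m n : ℕ} (A : Matrix (Fin m) (Fin n) ℝ)
    (hker : ∀ v : Fin n → ℤ, A.mulVec (fun k => (v k : ℝ)) = 0 → v = 0)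
    {a b : Fin n → ℕ} (h : A.mulVec (fun k => (a k : ℝ)) = A.mulVec (fun k => (b k : ℝ))) :
    a = b := by
  have h0 := hker (fun k => (a k : ℤ) - (b k : ℤ)) ?_
  · funext k
    have := congrFun h0 k
    simp at this
    omega
  · have : (fun k => (((a k : ℤ) - (b k : ℤ) : ℤ) : ℝ)) =
        (fun k => (a k : ℝ)) - (fun k => (b k : ℝ)) := by
      funext k; push_cast; rfl
    rw [this, Matrix.mulVec_sub, h, sub_self]

/-- If `A` is a real `m × n` matrix with `Ker(A) ∩ ℤⁿ = {0}` whose columns each have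
positive first nonzero entry, then `α < β ↔ Aα <_lex Aβ` is a monomial order on `ℕⁿ`. -/
theorem stmt_7 {m n : ℕ} (A : Matrix (Fin m) (Fin n) ℝ)
    (hker : ∀ v : Fin n → ℤ, A.mulVec (fun k => (v k : ℝ)) = 0 → v = 0)
    (hcol : ∀ j : Fin n, ∀ i : Fin m, A i j ≠ 0 → (∀ k : Fin m, k < i → A k j = 0) →
      0 < A i j) :
    IsMonomialOrder (fun a b : Fin n → ℕ =>
      lexLt (A.mulVec fun k => (a k : ℝ)) (A.mulVec fun k => (b k : ℝ))) := by
  classical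
  have hz : (fun k => ((0 : Fin n → ℕ) k : ℝ)) = (0 : Fin n → ℝ) := by funext k; simp
  set r := fun a b : Fin n → ℕ =>
    lexLt (A.mulVec fun k => (a k : ℝ)) (A.mulVec fun k => (b k : ℝ)) with hr
  have hirr : IsIrrefl (Fin n → ℕ) r := ⟨fun u => lexLt_irrefl _⟩
  have htr : IsTrans (Fin n → ℕ) r := ⟨fun u v w => lexLt_trans⟩
  have hso : IsStrictOrder (Fin n → ℕ) r := @IsStrictOrder.mk _ _ hirr htr
  have htri : IsTrichotomous (Fin n → ℕ) r := by
    constructor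
    intro a b h1 h2
    by_cases hab : a = b
    · exact hab
    · have hne : A.mulVec (fun k => (a k : ℝ)) ≠ A.mulVec (fun k => (b k : ℝ)) :=
        fun h => hab (mulVec_inj_aux A hker h)
      rcases lexLt_of_ne hne with h | h
      · exact absurd h h1
      · exact absurd h h2
  refine ⟨@IsStrictTotalOrder.mk _ _ htri hso, ?_, ?_⟩
  · intro a ha
    have := lexLt_zero_min_aux A hker hcol a ha
    simpa only [hr, hz, Matrix.mulVec_zero] using this
  · intro a b c h
    simp only [hr] at h ⊢
    have hc : (fun k => (((a + c) k : ℕ) : ℝ)) =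
        (fun k => (a k : ℝ)) + (fun k => (c k : ℝ)) := by
      funext k; simp [Pi.add_apply]
    have hc' : (fun k => (((b + c) k : ℕ) : ℝ)) =
        (fun k => (b k : ℝ)) + (fun k => (c k : ℝ)) := by
      funext k; simp [Pi.add_apply]
    rw [hc, hc', Matrix.mulVec_add, Matrix.mulVec_add]
    exact lexLt_add h
end

section
/- Fix n ≥ 4 and C_n as defined. For 1 ≤ i ≤ n let C_{n,i} be the (n−1) × (n−1) matrix obtained from C_n by deleting the i-th column and the n-th row. Then det(C_{n,1}) = (−1)^n, det(C_{n,i}) = (−1)^{n+i} for 2 ≤ i ≤ n−2, det(C_{n,n−1}) = −2n, and det(C_{n,n}) = 4 − 3n; in particular all are nonzero. -/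
open Matrix BigOperators

/-- The matrix `C_n` from the paper. -/
def Cmat (n : ℕ) : Matrix (Fin n) (Fin n) ℤ := Matrix.of fun i j =>
  if i.val = 0 then 1
  else if i.val = n - 1 then (if j.val = n - 1 then 1 else 0)
  else if i.val = n - 2 then
    (if j.val = 0 then ((n : ℤ) ^ 2 + n + 2) / 2 else (n : ℤ) - j.val)
  else if j.val = 0 ∨ j = i then 1 else 0

/-- The matrix `D_n` from the paper. -/
def Dmat (n : ℕ) : Matrix (Fin n) (Fin n) ℤ := Matrix.of fun i j =>
  if i.val = 0 then 1
  else if i.val = n - 1 then (if j.val = n - 1 then 1 else 0)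
  else if i.val = n - 2 then
    (if j.val = 0 then ((n : ℤ) ^ 2 - n) / 2
     else if j.val = n - 3 then 2
     else if j.val = n - 2 then 3
     else if j.val = n - 1 then 1
     else (n : ℤ) - j.val)
  else if j.val = 0 ∨ j = i then 1 else 0

/-- The embedding `Fin (n-1) → Fin n` skipping index `i` (used to delete the `i`-th column). -/
def delCol (n : ℕ) (i : Fin n) (j : Fin (n - 1)) : Fin n :=
  if j.val < i.val then ⟨j.val, lt_of_lt_of_le j.isLt (Nat.sub_le n 1)⟩
  else ⟨j.val + 1, by have h1 := j.isLt; have h2 := i.isLt; omega⟩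

/-- The embedding `Fin (n-1) → Fin n` keeping the first `n-1` indices
(used to delete the `n`-th row). -/
def keepRow (n : ℕ) (k : Fin (n - 1)) : Fin n :=
  ⟨k.val, lt_of_lt_of_le k.isLt (Nat.sub_le n 1)⟩

/-- `C_{n,i}`: delete the `i`-th column and the `n`-th row of `C_n`. -/
def Csub (n : ℕ) (i : Fin n) : Matrix (Fin (n - 1)) (Fin (n - 1)) ℤ :=
  (Cmat n).submatrix (keepRow n) (delCol n i)

/-- `D_{n,i}`: delete the `i`-th column and the `n`-th row of `D_n`. -/
def Dsub (n : ℕ) (i : Fin n) : Matrix (Fin (n - 1)) (Fin (n - 1)) ℤ :=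
  (Dmat n).submatrix (keepRow n) (delCol n i)


open Matrix BigOperators Finset

def Sv (m : ℕ) : ℤ := (((m+4 : ℕ) : ℤ)^2 + ((m+4:ℕ):ℤ) + 2)/2

lemma Sv_mul_two (m : ℕ) : Sv m * 2 = (m:ℤ)^2 + 9*m + 22 := by
  obtain ⟨t, ht⟩ := Int.even_mul_succ_self (m:ℤ)
  have h : ((m+4:ℕ):ℤ)^2 + ((m+4:ℕ):ℤ) + 2 = 2*(t + 4*m + 11) := by push_cast; nlinarith
  rw [Sv, h, Int.mul_ediv_cancel_left _ (by norm_num)]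
  linarith

def Bmat (m : ℕ) (t : ℤ) : Matrix (Fin (m+3)) (Fin (m+3)) ℤ := Matrix.of fun p q =>
  if p.val = 0 then 1
  else if p.val = m+2 then
    (if q.val = 0 then Sv m else if q.val = m+2 then t else ((m:ℤ)+4) - q.val)
  else if q.val = 0 ∨ q = p then 1 else 0

def s0 (m : ℕ) : Finset (Fin (m+3)) := Finset.univ.filter (fun k => 1 ≤ k.val ∧ k.val ≤ m+1)

lemma Bsum (m : ℕ) (t : ℤ) (g : Fin (m+3) → ℤ) (q : Fin (m+3)) :
    ∑ k ∈ s0 m, g k * Bmat m t k q =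
      if q.val = 0 then ∑ k ∈ s0 m, g k
      else if 1 ≤ q.val ∧ q.val ≤ m+1 then g q else 0 := by
  have hmem : ∀ k ∈ s0 m, 1 ≤ k.val ∧ k.val ≤ m+1 := by
    intro k hk; simpa [s0] using hk
  by_cases hq0 : q.val = 0
  · rw [if_pos hq0]
    apply Finset.sum_congr rfl
    intro k hk
    obtain ⟨h1, h2⟩ := hmem k hk
    have : Bmat m t k q = 1 := by
      simp only [Bmat, Matrix.of_apply]
      rw [if_neg (by omega), if_neg (by omega), if_pos (Or.inl hq0)]
    rw [this, mul_one]
  · rw [if_neg hq0]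
    have hB : ∀ k ∈ s0 m, Bmat m t k q = if q = k then 1 else 0 := by
      intro k hk
      obtain ⟨h1, h2⟩ := hmem k hk
      simp only [Bmat, Matrix.of_apply]
      rw [if_neg (by omega), if_neg (by omega)]
      by_cases h : q = k
      · rw [if_pos (Or.inr h), if_pos h]
      · rw [if_neg (by tauto), if_neg h]
    by_cases hq : 1 ≤ q.val ∧ q.val ≤ m+1
    · rw [if_pos hq]
      have hqmem : q ∈ s0 m := by simp [s0, hq.1, hq.2]
      rw [Finset.sum_congr rfl (fun k hk => by rw [hB k hk])]
      rw [Finset.sum_eq_single_of_mem q hqmem (fun k hk hne => by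
        rw [if_neg (fun (h : q = k) => hne h.symm), mul_zero])]
      simp
    · rw [if_neg hq]
      rw [Finset.sum_congr rfl (fun k hk => by rw [hB k hk])]
      apply Finset.sum_eq_zero
      intro k hk
      have := hmem k hk
      have : q ≠ k := fun h => hq (h ▸ hmem k hk)
      rw [if_neg this, mul_zero]

lemma sum_tail {m : ℕ} (f : ℕ → ℤ) :
    (∑ k : Fin (m+3), (if 1 ≤ k.val ∧ k.val ≤ m+1 then f k.val else 0))
      = ∑ j ∈ Finset.range (m+1), f (j+1) := by
  rw [Fin.sum_univ_eq_sum_range (fun j => if 1 ≤ j ∧ j ≤ m+1 then f j else 0) (m+3)]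
  rw [Finset.sum_range_succ, Finset.sum_range_succ]
  have h1 : ¬ (1 ≤ m+2 ∧ m+2 ≤ m+1) := by omega
  rw [if_neg h1, if_pos (by omega : 1 ≤ m+1 ∧ m+1 ≤ m+1)]
  rw [Finset.sum_range_succ' (fun j => if 1 ≤ j ∧ j ≤ m+1 then f j else 0) m]
  rw [if_neg (by omega : ¬ (1 ≤ 0 ∧ 0 ≤ m+1))]
  rw [Finset.sum_range_succ]
  have : ∀ j ∈ Finset.range m, (if 1 ≤ j+1 ∧ j+1 ≤ m+1 then f (j+1) else 0) = f (j+1) := by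
    intro j hj; rw [Finset.mem_range] at hj; rw [if_pos (by omega)]
  rw [Finset.sum_congr rfl this]
  ring

lemma sum_ones (m : ℕ) :
    (∑ k : Fin (m+3), (if 1 ≤ k.val ∧ k.val ≤ m+1 then (1:ℤ) else 0)) = m+1 := by
  rw [sum_tail (fun _ => (1:ℤ))]
  simp

lemma sum_nk (m : ℕ) :
    (∑ k : Fin (m+3), (if 1 ≤ k.val ∧ k.val ≤ m+1 then ((m:ℤ)+4) - k.val else 0)) * 2
      = ((m:ℤ)+1)*((m:ℤ)+6) := by
  rw [sum_tail (fun j => ((m:ℤ)+4) - j)]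
  have : ∀ j ∈ Finset.range (m+1), ((m:ℤ)+4) - (j+1 : ℕ) = ((m:ℤ)+3) - j := by
    intro j hj; push_cast; ring
  rw [Finset.sum_congr rfl this, Finset.sum_sub_distrib, Finset.sum_const]
  have hg : (∑ j ∈ Finset.range (m+1), (j:ℤ)) * 2 = (m+1) * m := by
    have h := Finset.sum_range_id_mul_two (m+1)
    have h2 : ((∑ j ∈ Finset.range (m+1), j) * 2 : ℕ) = (m+1) * m := by rw [h]; simp
    have := congrArg (Nat.cast : ℕ → ℤ) h2
    push_cast at this
    linarith
  simp only [Finset.card_range, nsmul_eq_mul]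
  push_cast
  nlinarith [hg]

lemma s0_sum_neg_ones (m : ℕ) : ∑ k ∈ s0 m, (-1 : ℤ) = -((m:ℤ)+1) := by
  have h : ∑ k ∈ s0 m, (-1:ℤ) = ∑ k : Fin (m+3), (if 1 ≤ k.val ∧ k.val ≤ m+1 then (-1:ℤ) else 0) := Finset.sum_filter _ _
  rw [h, sum_tail (fun _ => (-1:ℤ))]
  simp

lemma s0_sum_neg_nk (m : ℕ) :
    (∑ k ∈ s0 m, (-(((m:ℤ)+4) - (k.val:ℤ)))) * 2 = -(((m:ℤ)+1)*((m:ℤ)+6)) := by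
  have h : ∑ k ∈ s0 m, (-(((m:ℤ)+4) - (k.val:ℤ)))
      = ∑ k : Fin (m+3), (if 1 ≤ k.val ∧ k.val ≤ m+1 then (-(((m:ℤ)+4) - (k.val:ℤ))) else 0) :=
    Finset.sum_filter _ _
  have h2 : ∑ k : Fin (m+3), (if 1 ≤ k.val ∧ k.val ≤ m+1 then (-(((m:ℤ)+4) - (k.val:ℤ))) else 0)
      = - ∑ k : Fin (m+3), (if 1 ≤ k.val ∧ k.val ≤ m+1 then (((m:ℤ)+4) - (k.val:ℤ)) else 0) := by
    rw [← Finset.sum_neg_distrib]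
    apply Finset.sum_congr rfl
    intro k _
    split_ifs <;> ring
  rw [h, h2]
  have := sum_nk m
  linarith
-- row operation: add linear combination of other rows
lemma det_updateRow_add_sum {N : ℕ} (M : Matrix (Fin N) (Fin N) ℤ) (r : Fin N)
    (s : Finset (Fin N)) (hr : r ∉ s) (c : Fin N → ℤ) :
    (M.updateRow r (fun q => M r q + ∑ k ∈ s, c k * M k q)).det = M.det := by
  induction s using Finset.induction_on with
  | empty => simp
  | @insert a s ha ih =>
    have hra : r ≠ a := fun h => hr (h ▸ Finset.mem_insert_self a s)
    have hrs : r ∉ s := fun h => hr (Finset.mem_insert_of_mem h)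
    set Nmat := M.updateRow r (fun q => M r q + ∑ k ∈ s, c k * M k q) with hN
    have key : (M.updateRow r (fun q => M r q + ∑ k ∈ insert a s, c k * M k q))
        = Nmat.updateRow r (Nmat r + c a • Nmat a) := by
      ext p q
      rcases eq_or_ne p r with rfl | hp
      · simp [Matrix.updateRow_self, hN, Matrix.updateRow_ne hra.symm,
          Finset.sum_insert ha, Matrix.updateRow_apply]
        ring
      · simp [Matrix.updateRow_ne hp, hN]
    rw [key, Matrix.det_updateRow_add_smul_self _ hra, ih hrs]

def B1 (m : ℕ) (t : ℤ) : Matrix (Fin (m+3)) (Fin (m+3)) ℤ := Matrix.of fun p q =>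
  if p.val = 0 then (if q.val = 0 then -(m:ℤ) else if q.val = m+2 then 1 else 0)
  else Bmat m t p q

def B2 (m : ℕ) (t : ℤ) : Matrix (Fin (m+3)) (Fin (m+3)) ℤ := Matrix.of fun p q =>
  if p.val = m+2 then (if q.val = 0 then (m:ℤ)+8 else if q.val = m+2 then t else 0)
  else B1 m t p q

def B3 (m : ℕ) (t : ℤ) : Matrix (Fin (m+3)) (Fin (m+3)) ℤ := Matrix.of fun p q =>
  if p.val = m+2 then (if q.val = 0 then (m:ℤ)+8+t*(m:ℤ) else 0)
  else B1 m t p q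

lemma step1 (m : ℕ) (t : ℤ) :
    B1 m t = (Bmat m t).updateRow 0 (fun q => Bmat m t 0 q + ∑ k ∈ s0 m, (-1) * Bmat m t k q) := by
  ext p q
  rw [Matrix.updateRow_apply]
  by_cases hp : p = (0 : Fin (m+3))
  · subst hp
    rw [if_pos rfl, Bsum]
    have hq3 := q.isLt
    have hB0 : Bmat m t 0 q = 1 := by simp [Bmat]
    have hs := s0_sum_neg_ones m
    rw [hB0]
    simp only [B1, Matrix.of_apply, Fin.val_zero]
    split_ifs <;> first | omega | linarith
  · rw [if_neg hp]
    have : p.val ≠ 0 := fun h => hp (Fin.ext h)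
    simp only [B1, Matrix.of_apply, if_neg this]

lemma step1det (m : ℕ) (t : ℤ) : (B1 m t).det = (Bmat m t).det := by
  rw [step1]
  exact det_updateRow_add_sum _ _ _ (by simp [s0]) _

lemma B1row (m : ℕ) (t : ℤ) (k : Fin (m+3)) (hk : k.val ≠ 0) : B1 m t k = Bmat m t k := by
  funext q; simp only [B1, Matrix.of_apply, if_neg hk]

lemma step2 (m : ℕ) (t : ℤ) :
    B2 m t = (B1 m t).updateRow ⟨m+2, by omega⟩
      (fun q => B1 m t ⟨m+2, by omega⟩ q + ∑ k ∈ s0 m, (-(((m:ℤ)+4) - (k.val:ℤ))) * B1 m t k q) := by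
  ext p q
  rw [Matrix.updateRow_apply]
  by_cases hp : p = (⟨m+2, by omega⟩ : Fin (m+3))
  · subst hp
    rw [if_pos rfl]
    have hsum : ∑ k ∈ s0 m, (-(((m:ℤ)+4) - (k.val:ℤ))) * B1 m t k q
        = ∑ k ∈ s0 m, (-(((m:ℤ)+4) - (k.val:ℤ))) * Bmat m t k q := by
      apply Finset.sum_congr rfl
      intro k hk
      have : 1 ≤ k.val := by simp [s0] at hk; omega
      rw [B1row m t k (by omega)]
    rw [hsum, Bsum]
    have hq3 := q.isLt
    have hrow : B1 m t ⟨m+2, by omega⟩ q = Bmat m t ⟨m+2, by omega⟩ q := by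
      exact B1row m t ⟨m+2, by omega⟩ (by simp) ▸ rfl
    rw [hrow]
    have hs2 := s0_sum_neg_nk m
    have hSv := Sv_mul_two m
    simp only [B2, Bmat, Matrix.of_apply]
    split_ifs <;> first | contradiction | omega | linarith | (push_cast; linarith)
  · rw [if_neg hp]
    have : p.val ≠ m+2 := fun h => hp (Fin.ext h)
    simp only [B2, Matrix.of_apply, if_neg this]

lemma step2det (m : ℕ) (t : ℤ) : (B2 m t).det = (B1 m t).det := by
  rw [step2]
  exact det_updateRow_add_sum _ _ _ (by simp [s0]) _

lemma step3 (m : ℕ) (t : ℤ) :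
    B3 m t = (B2 m t).updateRow ⟨m+2, by omega⟩
      (B2 m t ⟨m+2, by omega⟩ + (-t) • B2 m t 0) := by
  ext p q
  rw [Matrix.updateRow_apply]
  by_cases hp : p = (⟨m+2, by omega⟩ : Fin (m+3))
  · subst hp
    rw [if_pos rfl]
    have hq3 := q.isLt
    simp only [B3, B2, B1, Pi.add_apply, Pi.smul_apply, smul_eq_mul, Matrix.of_apply,
      Fin.val_zero]
    split_ifs <;> first | contradiction | omega | ring
  · rw [if_neg hp]
    have : p.val ≠ m+2 := fun h => hp (Fin.ext h)
    simp only [B3, B2, Matrix.of_apply, if_neg this]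

lemma step3det (m : ℕ) (t : ℤ) : (B3 m t).det = (B2 m t).det := by
  rw [step3]
  exact Matrix.det_updateRow_add_smul_self _ (by simp [Fin.ext_iff]) _

lemma B3app (m : ℕ) (t : ℤ) (r c : Fin (m+3)) : B3 m t r c =
    (if r.val = m+2 then (if c.val = 0 then (m:ℤ)+8+t*(m:ℤ) else 0)
     else if r.val = 0 then (if c.val = 0 then -(m:ℤ) else if c.val = m+2 then 1 else 0)
     else if c.val = 0 ∨ c.val = r.val then 1 else 0) := by
  have hr := r.isLt
  simp only [B3, B1, Bmat, Matrix.of_apply, Fin.ext_iff]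
  split_ifs <;> first | rfl | omega | contradiction

lemma detB3 (m : ℕ) (t : ℤ) : (B3 m t).det = -((m:ℤ)+8+t*(m:ℤ)) := by
  set ρ : Equiv.Perm (Fin (m+3)) := Fin.cycleRange ⟨m+1, by omega⟩ with hρ
  set σ : Equiv.Perm (Fin (m+3)) := finRotate (m+3) with hσ
  have hρval : ∀ p : Fin (m+3), ((ρ p : Fin (m+3)) : ℕ)
      = if p.val < m+1 then p.val + 1 else if p.val = m+1 then 0 else m+2 := by
    intro p
    rcases Nat.lt_trichotomy p.val (m+1) with h | h | h
    · rw [if_pos h, hρ]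
      exact Fin.coe_cycleRange_of_lt (by rwa [Fin.lt_def])
    · rw [if_neg (by omega), if_pos h, hρ]
      have hp : p = ⟨m+1, by omega⟩ := Fin.ext h
      rw [hp, Fin.cycleRange_self]
      rfl
    · rw [if_neg (by omega), if_neg (by omega), hρ]
      have hgt := Fin.cycleRange_of_gt (show (⟨m+1, by omega⟩ : Fin (m+3)) < p from by
        rw [Fin.lt_def]; exact h)
      rw [hgt]
      have := p.isLt; omega
  have hσval : ∀ q : Fin (m+3), ((σ q : Fin (m+3)) : ℕ) = if q.val = m+2 then 0 else q.val + 1 := by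
    intro q
    rw [hσ, finRotate_succ_apply, Fin.val_add_one]
    by_cases h : q = Fin.last (m+2)
    · rw [if_pos h, if_pos (by rw [h]; rfl)]
    · rw [if_neg h, if_neg (show ¬((q:ℕ) = m+2) from fun hc => h (Fin.ext (by rw [Fin.val_last]; exact hc)))]
  have htri : ((B3 m t).submatrix (ρ : Fin (m+3) → Fin (m+3)) (σ : Fin (m+3) → Fin (m+3))).BlockTriangular id := by
    intro p q hlt
    have hlt' : q.val < p.val := hlt
    have hp := p.isLt; have hq := q.isLt
    have h2' : ((σ q : Fin (m+3)) : ℕ) = q.val + 1 := by rw [hσval, if_neg (by omega)]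
    simp only [Matrix.submatrix_apply, id_eq]
    rw [B3app]
    rcases Nat.lt_trichotomy p.val (m+1) with h | h | h
    · have h1' : ((ρ p : Fin (m+3)) : ℕ) = p.val + 1 := by rw [hρval, if_pos h]
      split_ifs <;> first | rfl | omega | (exfalso; omega)
    · have h1' : ((ρ p : Fin (m+3)) : ℕ) = 0 := by rw [hρval, if_neg (by omega), if_pos h]
      split_ifs <;> first | rfl | omega | (exfalso; omega)
    · have h1' : ((ρ p : Fin (m+3)) : ℕ) = m+2 := by rw [hρval, if_neg (by omega), if_neg (by omega)]
      split_ifs <;> first | rfl | omega | (exfalso; omega)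
  have hdet1 : ((B3 m t).submatrix (ρ : Fin (m+3) → Fin (m+3)) (σ : Fin (m+3) → Fin (m+3))).det
      = (m:ℤ)+8+t*(m:ℤ) := by
    rw [Matrix.det_of_upperTriangular htri]
    rw [Fintype.prod_eq_single (⟨m+2, by omega⟩ : Fin (m+3))]
    · simp only [Matrix.submatrix_apply, id_eq]
      rw [B3app]
      have h1' : ((ρ ⟨m+2, by omega⟩ : Fin (m+3)) : ℕ) = m+2 := by
        rw [hρval]; simp
      have h2' : ((σ ⟨m+2, by omega⟩ : Fin (m+3)) : ℕ) = 0 := by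
        rw [hσval]; simp
      split_ifs <;> first | rfl | omega | (exfalso; omega)
    · intro x hx
      have hxv : x.val ≠ m+2 := fun h => hx (Fin.ext h)
      have hxlt := x.isLt
      simp only [Matrix.submatrix_apply, id_eq]
      rw [B3app]
      rcases Nat.lt_trichotomy x.val (m+1) with h | h | h
      · have h1' : ((ρ x : Fin (m+3)) : ℕ) = x.val + 1 := by rw [hρval, if_pos h]
        have h2' : ((σ x : Fin (m+3)) : ℕ) = x.val + 1 := by rw [hσval, if_neg (by omega)]
        split_ifs <;> first | rfl | omega | (exfalso; omega)
      · have h1' : ((ρ x : Fin (m+3)) : ℕ) = 0 := by rw [hρval, if_neg (by omega), if_pos h]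
        have h2' : ((σ x : Fin (m+3)) : ℕ) = x.val + 1 := by rw [hσval, if_neg (by omega)]
        split_ifs <;> first | rfl | omega | (exfalso; omega)
      · omega
  have hperm := Matrix.det_permute ρ ((B3 m t).submatrix id (σ : Fin (m+3) → Fin (m+3)))
  rw [Matrix.det_permute' σ (B3 m t)] at hperm
  rw [show ((B3 m t).submatrix id (σ : Fin (m+3) → Fin (m+3))).submatrix (ρ : Fin (m+3) → Fin (m+3)) id
      = (B3 m t).submatrix (ρ : Fin (m+3) → Fin (m+3)) (σ : Fin (m+3) → Fin (m+3)) from rfl] at hperm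
  rw [hdet1, Fin.sign_cycleRange, show Equiv.Perm.sign σ = (-1 : ℤˣ)^(m+2) from by simpa [hσ] using sign_finRotate (m+3)] at hperm
  push_cast at hperm
  have hodd : ((-1:ℤ))^(m+1) * (-1)^(m+2) = -1 := by
    rw [← pow_add]; exact Odd.neg_one_pow ⟨m+1, by ring⟩
  rw [← mul_assoc, hodd] at hperm
  linarith

lemma detB (m : ℕ) (t : ℤ) : (Bmat m t).det = -((m:ℤ)+8+t*(m:ℤ)) := by
  rw [← step1det, ← step2det, ← step3det, detB3]

lemma Csub_apply (m : ℕ) (i : Fin (m+4)) (p q : Fin (m+3)) :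
    Csub (m+4) i p q =
      (if p.val = 0 then 1
       else if p.val = m+2 then
         (if (if q.val < i.val then q.val else q.val+1) = 0 then Sv m
          else ((m:ℤ)+4) - (if q.val < i.val then q.val else q.val+1 : ℕ))
       else if (if q.val < i.val then q.val else q.val+1) = 0
            ∨ (if q.val < i.val then q.val else q.val+1) = p.val then 1 else 0) := by
  have hdc : (delCol (m+4) i q).val = if q.val < i.val then q.val else q.val + 1 := by
    simp [delCol, apply_ite Fin.val]
  have hp := p.isLt
  simp only [Csub, Matrix.submatrix_apply, Cmat, Matrix.of_apply, keepRow, Sv, Fin.ext_iff]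
  rw [hdc]
  split_ifs <;> first | rfl | omega | (exfalso; omega) | (push_cast; ring)

lemma det_high1 (m : ℕ) (i : Fin (m+4)) (hi : i.val = m+2) :
    (Csub (m+4) i).det = -2*((m:ℤ)+4) := by
  have hC : Csub (m+4) i = Bmat m 1 := by
    ext p q
    have hp := p.isLt; have hq := q.isLt
    rw [Csub_apply]
    simp only [Bmat, Matrix.of_apply, hi, Fin.ext_iff]
    split_ifs <;> (try simp only [false_or] at *) <;>
      first | rfl | contradiction | omega | (exfalso; omega) | (push_cast; ring)
  rw [hC, detB]; ring

lemma det_high2 (m : ℕ) (i : Fin (m+4)) (hi : i.val = m+3) :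
    (Csub (m+4) i).det = 4 - 3*((m:ℤ)+4) := by
  have hC : Csub (m+4) i = Bmat m 2 := by
    ext p q
    have hp := p.isLt; have hq := q.isLt
    rw [Csub_apply]
    simp only [Bmat, Matrix.of_apply, hi, Fin.ext_iff]
    split_ifs <;> (try simp only [false_or] at *) <;>
      first | rfl | contradiction | omega | (exfalso; omega) | (push_cast; ring)
  rw [hC, detB]; ring

def A1 (m iv : ℕ) : Matrix (Fin (m+3)) (Fin (m+3)) ℤ := Matrix.of fun p q =>
  if q.val = 0 ∧ 1 ≤ iv then (if p.val = iv then 1 else 0)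
  else if p.val = 0 then 1
  else if p.val = m+2 then ((m:ℤ)+4) - (if q.val < iv then (q.val:ℤ) else (q.val:ℤ)+1)
  else if (if q.val < iv then q.val else q.val+1) = p.val then 1 else 0

lemma detA1 (m : ℕ) (i : Fin (m+4)) (hi : i.val ≤ m+1) :
    (Csub (m+4) i).det = (A1 m i.val).det := by
  rcases Nat.eq_zero_or_pos i.val with h0 | h1
  · have : Csub (m+4) i = A1 m i.val := by
      ext p q
      have hp := p.isLt; have hq := q.isLt
      rw [Csub_apply]
      simp only [A1, Matrix.of_apply, h0]
      split_ifs <;> (try simp only [false_or] at *) <;>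
        first | rfl | contradiction | omega | (exfalso; omega) | (push_cast; ring)
    rw [this]
  · apply Matrix.det_eq_of_forall_row_eq_smul_add_const
      (fun p : Fin (m+3) => if p.val = i.val then 0 else if p.val = m+2 then Sv m else 1)
      (⟨i.val, by omega⟩ : Fin (m+3))
    · simp
    · intro p q
      have hp := p.isLt; have hq := q.isLt
      rw [Csub_apply]
      simp only [A1, Matrix.of_apply]
      split_ifs <;> (try simp only [false_or] at *) <;>
        first | rfl | contradiction | omega | (exfalso; omega) | (push_cast; ring)

def s1 (m iv : ℕ) : Finset (Fin (m+3)) :=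
  Finset.univ.filter (fun k => 1 ≤ k.val ∧ k.val ≤ m+1 ∧ k.val ≠ iv)

lemma A1row (m iv : ℕ) (k q : Fin (m+3)) (hk : 1 ≤ k.val) (hk2 : k.val ≤ m+1) (hk3 : k.val ≠ iv) :
    A1 m iv k q = if (¬(q.val = 0 ∧ 1 ≤ iv)) ∧ (if q.val < iv then q.val else q.val+1) = k.val
      then 1 else 0 := by
  simp only [A1, Matrix.of_apply]
  split_ifs <;> first | rfl | contradiction | omega | (exfalso; omega)

lemma A1sum (m iv : ℕ) (hiv : iv ≤ m+1) (gg : Fin (m+3) → ℤ) (g : ℕ → ℤ)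
    (hg : ∀ k : Fin (m+3), gg k = g k.val) (q : Fin (m+3)) :
    ∑ k ∈ s1 m iv, gg k * A1 m iv k q =
      if (q.val = 0 ∧ 1 ≤ iv) ∨ m+1 ≤ q.val then 0
      else g (if q.val < iv then q.val else q.val + 1) := by
  have hmem : ∀ k ∈ s1 m iv, 1 ≤ k.val ∧ k.val ≤ m+1 ∧ k.val ≠ iv := by
    intro k hk; simpa [s1] using hk
  have hq := q.isLt
  rw [Finset.sum_congr rfl (fun k _ => by rw [hg k])]
  by_cases hc : (q.val = 0 ∧ 1 ≤ iv) ∨ m+1 ≤ q.val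
  · rw [if_pos hc]
    apply Finset.sum_eq_zero
    intro k hk
    obtain ⟨h1, h2, h3⟩ := hmem k hk
    rcases hc with hc | hc
    · rw [A1row m iv k q h1 h2 h3, if_neg (fun h => h.1 hc), mul_zero]
    · have hd2 : m+2 ≤ (if q.val < iv then q.val else q.val + 1) := by split_ifs <;> omega
      rw [A1row m iv k q h1 h2 h3, if_neg (fun h => by omega), mul_zero]
  · rw [if_neg hc]
    push_neg at hc
    have hdq1 : 1 ≤ (if q.val < iv then q.val else q.val + 1)
        ∧ (if q.val < iv then q.val else q.val + 1) ≤ m+1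
        ∧ (if q.val < iv then q.val else q.val + 1) ≠ iv := by
      split_ifs <;> omega
    have hmem2 : (⟨if q.val < iv then q.val else q.val + 1, by omega⟩ : Fin (m+3)) ∈ s1 m iv := by
      simp only [s1, Finset.mem_filter, Finset.mem_univ, true_and]
      exact hdq1
    rw [Finset.sum_eq_single_of_mem _ hmem2]
    · obtain ⟨h1, h2, h3⟩ := hmem _ hmem2
      rw [A1row m iv _ q h1 h2 h3]
      have hcond : (¬(q.val = 0 ∧ 1 ≤ iv)) ∧ (if q.val < iv then q.val else q.val+1)
          = ((⟨if q.val < iv then q.val else q.val + 1, by omega⟩ : Fin (m+3))).val :=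
        ⟨by omega, rfl⟩
      rw [if_pos hcond, mul_one]
    · intro k hk hne
      obtain ⟨h1, h2, h3⟩ := hmem k hk
      rw [A1row m iv k q h1 h2 h3, if_neg, mul_zero]
      rintro ⟨hA, hB⟩
      exact hne (Fin.ext (show k.val = (if q.val < iv then q.val else q.val + 1) by omega))

def A2 (m iv : ℕ) : Matrix (Fin (m+3)) (Fin (m+3)) ℤ := Matrix.of fun p q =>
  if p.val = 0 then (if m+1 ≤ q.val then 1 else 0) else A1 m iv p q

def A3 (m iv : ℕ) : Matrix (Fin (m+3)) (Fin (m+3)) ℤ := Matrix.of fun p q =>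
  if p.val = m+2 then (if q.val = m+1 then 2 else if q.val = m+2 then 1 else 0) else A2 m iv p q

def A4 (m iv : ℕ) : Matrix (Fin (m+3)) (Fin (m+3)) ℤ := Matrix.of fun p q =>
  if p.val = m+2 then (if q.val = m+2 then -1 else 0) else A2 m iv p q

def A5 (m iv : ℕ) : Matrix (Fin (m+3)) (Fin (m+3)) ℤ := Matrix.of fun p q =>
  if p.val = 0 then (if q.val = m+1 then 1 else 0) else A4 m iv p q

lemma detA2 (m iv : ℕ) (hiv : iv ≤ m+1) : (A2 m iv).det = (A1 m iv).det := by
  have hA : A2 m iv = (A1 m iv).updateRow 0 (fun q => A1 m iv 0 q + ∑ k ∈ s1 m iv, (-1) * A1 m iv k q) := by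
    ext p q
    rw [Matrix.updateRow_apply]
    by_cases hp : p = (0 : Fin (m+3))
    · subst hp
      rw [if_pos rfl]
      rw [A1sum m iv hiv _ (fun _ : ℕ => (-1:ℤ)) (fun _ => rfl) q]
      have hq := q.isLt
      simp only [A2, A1, Matrix.of_apply, Fin.val_zero]
      split_ifs <;> first | rfl | contradiction | omega | (exfalso; omega) | ring
    · rw [if_neg hp]
      have : p.val ≠ 0 := fun h => hp (Fin.ext h)
      simp only [A2, Matrix.of_apply, if_neg this]
  rw [hA]
  exact det_updateRow_add_sum _ _ _ (by simp [s1]) _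

lemma detA3 (m iv : ℕ) (hiv : iv ≤ m+1) : (A3 m iv).det = (A2 m iv).det := by
  have hA : A3 m iv = (A2 m iv).updateRow ⟨m+2, by omega⟩
      (fun q => A2 m iv ⟨m+2, by omega⟩ q + ∑ k ∈ s1 m iv, ((k.val:ℤ) - ((m:ℤ)+4)) * A2 m iv k q) := by
    ext p q
    rw [Matrix.updateRow_apply]
    by_cases hp : p = (⟨m+2, by omega⟩ : Fin (m+3))
    · subst hp
      rw [if_pos rfl]
      have hrw : ∀ k ∈ s1 m iv, ((k.val:ℤ) - ((m:ℤ)+4)) * A2 m iv k q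
          = ((k.val:ℤ) - ((m:ℤ)+4)) * A1 m iv k q := by
        intro k hk
        have hk1 : 1 ≤ k.val := by simp [s1] at hk; omega
        simp only [A2, Matrix.of_apply, if_neg (by omega : ¬ k.val = 0)]
      rw [Finset.sum_congr rfl hrw,
        A1sum m iv hiv _ (fun j : ℕ => (j:ℤ) - ((m:ℤ)+4)) (fun _ => rfl) q]
      have hq := q.isLt
      simp only [A3, A2, A1, Matrix.of_apply]
      split_ifs <;> first | rfl | contradiction | omega | (exfalso; omega) | (push_cast; ring)
    · rw [if_neg hp]
      have : p.val ≠ m+2 := fun h => hp (Fin.ext h)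
      simp only [A3, Matrix.of_apply, if_neg this]
  rw [hA]
  exact det_updateRow_add_sum _ _ _ (by simp [s1]) _

lemma detA4 (m iv : ℕ) : (A4 m iv).det = (A3 m iv).det := by
  have hA : A4 m iv = (A3 m iv).updateRow ⟨m+2, by omega⟩
      (A3 m iv ⟨m+2, by omega⟩ + (-2 : ℤ) • A3 m iv 0) := by
    ext p q
    rw [Matrix.updateRow_apply]
    by_cases hp : p = (⟨m+2, by omega⟩ : Fin (m+3))
    · subst hp
      rw [if_pos rfl]
      have hq := q.isLt
      simp only [A4, A3, A2, Pi.add_apply, Pi.smul_apply, smul_eq_mul, Matrix.of_apply, Fin.val_zero]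
      split_ifs <;> first | rfl | contradiction | omega | (exfalso; omega) | ring
    · rw [if_neg hp]
      have : p.val ≠ m+2 := fun h => hp (Fin.ext h)
      simp only [A4, A3, Matrix.of_apply, if_neg this]
  rw [hA]
  exact Matrix.det_updateRow_add_smul_self _ (by simp [Fin.ext_iff]) _

lemma detA5 (m iv : ℕ) : (A5 m iv).det = (A4 m iv).det := by
  have hA : A5 m iv = (A4 m iv).updateRow 0
      (A4 m iv 0 + (1 : ℤ) • A4 m iv ⟨m+2, by omega⟩) := by
    ext p q
    rw [Matrix.updateRow_apply]
    by_cases hp : p = (0 : Fin (m+3))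
    · subst hp
      rw [if_pos rfl]
      have hq := q.isLt
      simp only [A5, A4, A2, Pi.add_apply, Pi.smul_apply, smul_eq_mul, Matrix.of_apply, Fin.val_zero]
      split_ifs <;> first | rfl | contradiction | omega | (exfalso; omega) | ring
    · rw [if_neg hp]
      have : p.val ≠ 0 := fun h => hp (Fin.ext h)
      simp only [A5, Matrix.of_apply, if_neg this]
  rw [hA]
  exact Matrix.det_updateRow_add_smul_self _ (by simp [Fin.ext_iff]) _

lemma A5app (m iv : ℕ) (r c : Fin (m+3)) : A5 m iv r c =
    (if r.val = 0 then (if c.val = m+1 then 1 else 0)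
     else if r.val = m+2 then (if c.val = m+2 then -1 else 0)
     else if c.val = 0 ∧ 1 ≤ iv then (if r.val = iv then 1 else 0)
     else if (if c.val < iv then c.val else c.val+1) = r.val then 1 else 0) := by
  have hr := r.isLt
  simp only [A5, A4, A2, A1, Matrix.of_apply]
  split_ifs <;> first | rfl | contradiction | omega | (exfalso; omega)

lemma detA5val (m iv : ℕ) (hiv : iv ≤ m+1) :
    (A5 m iv).det = (-1:ℤ)^(m+1) * ((-1:ℤ)^(iv-1) * (-1)) := by
  set σ : Equiv.Perm (Fin (m+3)) := Fin.cycleRange ⟨m+1, by omega⟩ with hσ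
  set ρ : Equiv.Perm (Fin (m+3)) := Fin.cycleRange ⟨iv-1, by omega⟩ with hρ
  set d : Fin (m+3) → ℤ := fun c => if c.val = m+2 then -1 else 1 with hd
  have hσval : ∀ p : Fin (m+3), ((σ p : Fin (m+3)) : ℕ)
      = if p.val < m+1 then p.val + 1 else if p.val = m+1 then 0 else m+2 := by
    intro p
    rcases Nat.lt_trichotomy p.val (m+1) with h | h | h
    · rw [if_pos h, hσ]
      exact Fin.coe_cycleRange_of_lt (by rwa [Fin.lt_def])
    · rw [if_neg (by omega), if_pos h, hσ]
      have hp : p = ⟨m+1, by omega⟩ := Fin.ext h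
      rw [hp, Fin.cycleRange_self]
      rfl
    · rw [if_neg (by omega), if_neg (by omega), hσ]
      have hgt := Fin.cycleRange_of_gt (show (⟨m+1, by omega⟩ : Fin (m+3)) < p from by
        rw [Fin.lt_def]; exact h)
      rw [hgt]
      have := p.isLt; omega
  have hρval : ∀ p : Fin (m+3), ((ρ p : Fin (m+3)) : ℕ)
      = if p.val < iv-1 then p.val + 1 else if p.val = iv-1 then 0 else p.val := by
    intro p
    rcases Nat.lt_trichotomy p.val (iv-1) with h | h | h
    · rw [if_pos h, hρ]
      exact Fin.coe_cycleRange_of_lt (by rw [Fin.lt_def]; exact h)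
    · rw [if_neg (by omega), if_pos h, hρ]
      have hp : p = ⟨iv-1, by omega⟩ := Fin.ext h
      rw [hp, Fin.cycleRange_self]
      rfl
    · rw [if_neg (by omega), if_neg (by omega), hρ]
      rw [Fin.cycleRange_of_gt (show (⟨iv-1, by omega⟩ : Fin (m+3)) < p from by
        rw [Fin.lt_def]; exact h)]
  have key : (A5 m iv).submatrix (σ : Fin (m+3) → Fin (m+3)) id
      = (Matrix.diagonal d).submatrix (ρ : Fin (m+3) → Fin (m+3)) id := by
    ext j c
    have hj := j.isLt; have hc := c.isLt
    have h1 := hσval j; have h2 := hρval j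
    simp only [Matrix.submatrix_apply, id_eq, Matrix.diagonal_apply, Fin.ext_iff, hd]
    rw [A5app]
    rcases Nat.lt_trichotomy j.val (m+1) with h | h | h
    · rw [if_pos h] at h1
      rcases Nat.lt_trichotomy j.val (iv-1) with h' | h' | h'
      · rw [if_pos h'] at h2
        split_ifs <;> first | rfl | omega | (exfalso; omega)
      · rw [if_neg (by omega), if_pos h'] at h2
        split_ifs <;> first | rfl | omega | (exfalso; omega)
      · rw [if_neg (by omega), if_neg (by omega)] at h2
        split_ifs <;> first | rfl | omega | (exfalso; omega)
    · rw [if_neg (by omega), if_pos h] at h1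
      rw [if_neg (by omega), if_neg (by omega)] at h2
      split_ifs <;> first | rfl | omega | (exfalso; omega)
    · rw [if_neg (by omega), if_neg (by omega)] at h1
      rw [if_neg (by omega), if_neg (by omega)] at h2
      split_ifs <;> first | rfl | omega | (exfalso; omega)
  have hdd : (Matrix.diagonal d).det = -1 := by
    rw [Matrix.det_diagonal]
    rw [Fintype.prod_eq_single (⟨m+2, by omega⟩ : Fin (m+3))]
    · simp [hd]
    · intro x hx
      have : x.val ≠ m+2 := fun h => hx (Fin.ext h)
      simp [hd, this]
  have h1 := Matrix.det_permute σ (A5 m iv)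
  have h2 := Matrix.det_permute ρ (Matrix.diagonal d)
  rw [key, h2, hdd, hσ, hρ, Fin.sign_cycleRange, Fin.sign_cycleRange] at h1
  have h1' : ((-1:ℤ)^(iv-1)) * (-1) = (-1:ℤ)^(m+1) * (A5 m iv).det := by
    exact_mod_cast h1
  have hsq : (-1:ℤ)^(m+1) * (-1)^(m+1) = 1 := by
    rw [← pow_add]; exact Even.neg_one_pow ⟨m+1, by ring⟩
  calc (A5 m iv).det = ((-1:ℤ)^(m+1) * (-1)^(m+1)) * (A5 m iv).det := by rw [hsq, one_mul]
    _ = (-1:ℤ)^(m+1) * ((-1)^(m+1) * (A5 m iv).det) := by ring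
    _ = (-1:ℤ)^(m+1) * ((-1:ℤ)^(iv-1) * (-1)) := by rw [← h1']

lemma det_low (m : ℕ) (i : Fin (m+4)) (hi : i.val ≤ m+1) :
    (Csub (m+4) i).det = (-1:ℤ)^(m+1) * ((-1:ℤ)^(i.val-1) * (-1)) := by
  rw [detA1 m i hi, ← detA2 m i.val hi, ← detA3 m i.val hi, ← detA4 m i.val, ← detA5 m i.val,
    detA5val m i.val hi]

lemma negpow (a b : ℕ) (h : a % 2 = b % 2) : (-1:ℤ)^a = (-1)^b := by
  rcases Nat.even_or_odd a with ha | ha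
  · rw [ha.neg_one_pow, (Nat.even_iff.mpr (by rw [Nat.even_iff] at ha; omega)).neg_one_pow]
  · rw [ha.neg_one_pow, (Nat.odd_iff.mpr (by rw [Nat.odd_iff] at ha; omega)).neg_one_pow]


/-- Determinants of the submatrices `C_{n,i}` of `C_n`; in particular all are nonzero.
(Here `i` is 0-indexed: `i.val = 0` is the paper's `i = 1`, etc.) -/
theorem stmt_13 {n : ℕ} (hn : 4 ≤ n) (i : Fin n) :
    (Csub n i).det ≠ 0 ∧
    (i.val = 0 → (Csub n i).det = (-1) ^ n) ∧
    (1 ≤ i.val → i.val ≤ n - 3 → (Csub n i).det = (-1) ^ (n + i.val + 1)) ∧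
    (i.val = n - 2 → (Csub n i).det = -2 * n) ∧
    (i.val = n - 1 → (Csub n i).det = 4 - 3 * n) := by
  obtain ⟨m, rfl⟩ : ∃ m, n = m + 4 := ⟨n - 4, by omega⟩
  have hilt := i.isLt
  rcases Nat.lt_or_ge i.val (m+2) with hlow | hhigh
  · -- low case : i.val ≤ m+1
    have hi : i.val ≤ m+1 := by omega
    have hdet := det_low m i hi
    have hform : (-1:ℤ)^(m+1) * ((-1:ℤ)^(i.val-1) * (-1)) = (-1:ℤ)^(m+1+(i.val-1)+1) := by
      rw [pow_add, pow_add, pow_one]; ring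
    rw [hform] at hdet
    refine ⟨?_, ?_, ?_, ?_, ?_⟩
    · rw [hdet]; exact pow_ne_zero _ (by norm_num)
    · intro h0
      rw [hdet]
      exact negpow _ _ (by omega)
    · intro h1 h2
      rw [hdet]
      exact negpow _ _ (by omega)
    · intro h; omega
    · intro h; omega
  · -- high case
    rcases Nat.lt_or_ge i.val (m+3) with h2 | h3
    · have hi : i.val = m+2 := by omega
      have hdet := det_high1 m i hi
      refine ⟨?_, ?_, ?_, ?_, ?_⟩
      · rw [hdet]; intro h; have : (0:ℤ) ≤ (m:ℤ) := by positivity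
        nlinarith
      · intro h; omega
      · intro h1 h2; omega
      · intro h
        rw [hdet]; push_cast; ring
      · intro h; omega
    · have hi : i.val = m+3 := by omega
      have hdet := det_high2 m i hi
      refine ⟨?_, ?_, ?_, ?_, ?_⟩
      · rw [hdet]; intro h; have : (0:ℤ) ≤ (m:ℤ) := by positivity
        nlinarith
      · intro h; omega
      · intro h1 h2; omega
      · intro h; omega
      · intro h
        rw [hdet]; push_cast; ring
end
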